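/- arXiv:2402.18111 — 8 statements merged into one kernel-verified Lean document; each statement's English description precedes it below -/
import Mathlib

section
/- For every real a > 1/2 there exists a constant C_a > 0 such that for all τ > 0, ∫₀^π (2(1 − cos θ) + τ)^{−a} dθ ≤ C_a · min{ τ^{1/2 − a}, τ^{−a} }. -/
open MeasureTheory Real

/-- For every real `a > 1/2` there exists a constant `C_a > 0` such that
for all `τ > 0`,
`∫₀^π (2(1 − cos θ) + τ)^{−a} dθ ≤ C_a · min{ τ^{1/2 − a}, τ^{−a} }`. -/
theorem stmt_0 (a : ℝ) (ha : 1 / 2 < a) :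
    ∃ C : ℝ, 0 < C ∧ ∀ τ : ℝ, 0 < τ →
      (∫ θ in (0:ℝ)..Real.pi, (2 * (1 - Real.cos θ) + τ) ^ (-a)) ≤
        C * min (τ ^ ((1:ℝ)/2 - a)) (τ ^ (-a)) := by
  have hpi : (0:ℝ) < Real.pi := Real.pi_pos
  have h2a : (0:ℝ) < 2 * a - 1 := by linarith
  set c : ℝ := 4 / Real.pi ^ 2 with hc
  have hcpos : 0 < c := by positivity
  refine ⟨Real.pi + 1 + c ^ (-a) / (2 * a - 1), by positivity, fun τ hτ => ?_⟩
  have hcont : Continuous fun θ : ℝ => (2 * (1 - Real.cos θ) + τ) ^ (-a) := by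
    apply Continuous.rpow_const (by continuity)
    intro x; left
    have := Real.cos_le_one x
    nlinarith
  have hbase : ∀ θ : ℝ, 0 < 2 * (1 - Real.cos θ) + τ := by
    intro θ; have := Real.cos_le_one θ; nlinarith
  have hInt : ∀ u v : ℝ, IntervalIntegrable
      (fun θ : ℝ => (2 * (1 - Real.cos θ) + τ) ^ (-a)) volume u v :=
    fun u v => hcont.intervalIntegrable u v
  -- pointwise bound by τ^{-a}
  have hptw : ∀ θ : ℝ, (2 * (1 - Real.cos θ) + τ) ^ (-a) ≤ τ ^ (-a) := by
    intro θ
    apply Real.rpow_le_rpow_of_nonpos hτ _ (by linarith)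
    have := Real.cos_le_one θ; nlinarith
  by_cases hτ1 : 1 ≤ τ
  · -- easy regime: min is τ^{-a}
    have hmin : min (τ ^ ((1:ℝ)/2 - a)) (τ ^ (-a)) = τ ^ (-a) :=
      min_eq_right (Real.rpow_le_rpow_of_exponent_le hτ1 (by linarith))
    rw [hmin]
    calc (∫ θ in (0:ℝ)..Real.pi, (2 * (1 - Real.cos θ) + τ) ^ (-a))
        ≤ ∫ θ in (0:ℝ)..Real.pi, τ ^ (-a) := by
          apply intervalIntegral.integral_mono_on hpi.le (hInt 0 Real.pi)
            (intervalIntegrable_const)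
          intro θ _; exact hptw θ
      _ = Real.pi * τ ^ (-a) := by simp
      _ ≤ (Real.pi + 1 + c ^ (-a) / (2 * a - 1)) * τ ^ (-a) := by
          have : (0:ℝ) < τ ^ (-a) := Real.rpow_pos_of_pos hτ _
          nlinarith [Real.rpow_pos_of_pos hcpos (-a), h2a,
            div_pos (Real.rpow_pos_of_pos hcpos (-a)) h2a]
  · push_neg at hτ1
    have hmin : min (τ ^ ((1:ℝ)/2 - a)) (τ ^ (-a)) = τ ^ ((1:ℝ)/2 - a) :=
      min_eq_left (Real.rpow_le_rpow_of_exponent_ge hτ hτ1.le (by linarith))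
    rw [hmin]
    set s : ℝ := τ ^ ((1:ℝ)/2) with hs
    have hspos : 0 < s := Real.rpow_pos_of_pos hτ _
    have hs1 : s ≤ 1 := Real.rpow_le_one hτ.le hτ1.le (by norm_num)
    have hsπ : s ≤ Real.pi := hs1.trans (by linarith [Real.pi_gt_three])
    -- s^(1-2a) = τ^(1/2-a)
    have hsval : s ^ (1 - 2 * a) = τ ^ ((1:ℝ)/2 - a) := by
      rw [hs, ← Real.rpow_mul hτ.le]; ring_nf
    -- split the integral
    have hsplit : (∫ θ in (0:ℝ)..Real.pi, (2 * (1 - Real.cos θ) + τ) ^ (-a)) =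
        (∫ θ in (0:ℝ)..s, (2 * (1 - Real.cos θ) + τ) ^ (-a)) +
        ∫ θ in s..Real.pi, (2 * (1 - Real.cos θ) + τ) ^ (-a) :=
      (intervalIntegral.integral_add_adjacent_intervals (hInt 0 s) (hInt s Real.pi)).symm
    -- first part
    have h1 : (∫ θ in (0:ℝ)..s, (2 * (1 - Real.cos θ) + τ) ^ (-a)) ≤ τ ^ ((1:ℝ)/2 - a) := by
      calc (∫ θ in (0:ℝ)..s, (2 * (1 - Real.cos θ) + τ) ^ (-a))
          ≤ ∫ θ in (0:ℝ)..s, τ ^ (-a) := by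
            apply intervalIntegral.integral_mono_on hspos.le (hInt 0 s)
              intervalIntegrable_const
            intro θ _; exact hptw θ
        _ = s * τ ^ (-a) := by simp
        _ = τ ^ ((1:ℝ)/2 - a) := by
            rw [hs, ← Real.rpow_add hτ]; ring_nf
    -- second part
    have hIntMaj : IntervalIntegrable (fun θ : ℝ => c ^ (-a) * θ ^ (-(2*a))) volume s Real.pi := by
      apply IntervalIntegrable.const_mul
      apply intervalIntegral.intervalIntegrable_rpow (Or.inr ?_)
      rw [Set.mem_uIcc]; push_neg
      constructor <;> intro h <;> linarith
    have h2 : (∫ θ in s..Real.pi, (2 * (1 - Real.cos θ) + τ) ^ (-a)) ≤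
        c ^ (-a) / (2 * a - 1) * τ ^ ((1:ℝ)/2 - a) := by
      have hptw2 : ∀ θ ∈ Set.Icc s Real.pi,
          (2 * (1 - Real.cos θ) + τ) ^ (-a) ≤ c ^ (-a) * θ ^ (-(2*a)) := by
        intro θ hθ
        have hθpos : 0 < θ := lt_of_lt_of_le hspos hθ.1
        have hcos : Real.cos θ ≤ 1 - 2 / Real.pi ^ 2 * θ ^ 2 := by
          apply Real.cos_le_one_sub_mul_cos_sq
          rw [abs_le]; constructor <;> [linarith; exact hθ.2]
        have hlow : c * θ ^ 2 ≤ 2 * (1 - Real.cos θ) + τ := by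
          have hcθ2 : c * θ ^ 2 = 2 * (2 / Real.pi ^ 2 * θ ^ 2) := by rw [hc]; ring
          linarith
        have hcθ : 0 < c * θ ^ 2 := by positivity
        calc (2 * (1 - Real.cos θ) + τ) ^ (-a) ≤ (c * θ ^ 2) ^ (-a) :=
              Real.rpow_le_rpow_of_nonpos hcθ hlow (by linarith)
          _ = c ^ (-a) * θ ^ (-(2*a)) := by
              rw [Real.mul_rpow hcpos.le (by positivity), ← Real.rpow_natCast θ 2,
                ← Real.rpow_mul hθpos.le]
              norm_num
      calc (∫ θ in s..Real.pi, (2 * (1 - Real.cos θ) + τ) ^ (-a))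
          ≤ ∫ θ in s..Real.pi, c ^ (-a) * θ ^ (-(2*a)) :=
            intervalIntegral.integral_mono_on hsπ (hInt s Real.pi) hIntMaj hptw2
        _ = c ^ (-a) * ∫ θ in s..Real.pi, θ ^ (-(2*a)) := by
            rw [intervalIntegral.integral_const_mul]
        _ = c ^ (-a) * ((Real.pi ^ (-(2*a) + 1) - s ^ (-(2*a) + 1)) / (-(2*a) + 1)) := by
            rw [integral_rpow (Or.inr ⟨by intro h; apply h2a.ne'; linarith, ?_⟩)]
            rw [Set.mem_uIcc]; push_neg
            constructor <;> intro h <;> linarith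
        _ = c ^ (-a) * ((s ^ (1 - 2*a) - Real.pi ^ (1 - 2*a)) / (2 * a - 1)) := by
            rw [show -(2*a) + 1 = 1 - 2*a by ring]
            congr 1
            rw [div_eq_div_iff (by intro h; apply h2a.ne'; linarith : (1:ℝ) - 2*a ≠ 0)
              (h2a.ne' : (2*a - 1 : ℝ) ≠ 0)]
            ring
        _ ≤ c ^ (-a) * (s ^ (1 - 2*a) / (2 * a - 1)) := by
            have hπx : 0 ≤ Real.pi ^ (1 - 2*a) := Real.rpow_nonneg hpi.le _
            have hca : 0 ≤ c ^ (-a) := Real.rpow_nonneg hcpos.le _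
            apply mul_le_mul_of_nonneg_left _ hca
            apply (div_le_div_iff_of_pos_right h2a).mpr
            linarith
        _ = c ^ (-a) / (2 * a - 1) * τ ^ ((1:ℝ)/2 - a) := by
            rw [hsval]; ring
    have hτpos' : 0 < τ ^ ((1:ℝ)/2 - a) := Real.rpow_pos_of_pos hτ _
    rw [hsplit]
    nlinarith [h1, h2]
end

section
/- There exists an absolute constant C > 0 such that for all r, s > 0 and all r̄, s̄ ≥ 0 with (r, s) ≠ (r̄, s̄), one has ∫₀^π ∫₀^π r̄ s̄ · X₋₋^{−3/2} dφ̄ dθ̄ ≤ C · min{ (r̄ s̄/(r s))^{1/2}, (s̄/s)^{1/2}, (r̄/r)^{1/2} } · ((r − r̄)² + (s − s̄)²)^{−1/2}. -/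
open MeasureTheory Real intervalIntegral

/-- `X₋₋(r,s,r̄,s̄,θ̄,φ̄) = (r−r̄)² + (s−s̄)² + 2rr̄(1−cos θ̄) + 2ss̄(1−cos φ̄)`. -/
noncomputable def Xmm (r s rb sb θ φ : ℝ) : ℝ :=
  (r - rb) ^ 2 + (s - sb) ^ 2 + 2 * r * rb * (1 - Real.cos θ) + 2 * s * sb * (1 - Real.cos φ)

lemma rpow_neg32 {x : ℝ} (hx : 0 < x) : x ^ (-(3:ℝ)/2) = 1 / (x * Real.sqrt x) := by
  rw [show (-(3:ℝ)/2) = -(1 + 1/2) by norm_num, Real.rpow_neg hx.le, Real.rpow_add hx,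
    Real.rpow_one, ← Real.sqrt_eq_rpow]
  field_simp

lemma hasDeriv32 {D b : ℝ} (hD : 0 < D) (hb : 0 ≤ b) (x : ℝ) :
    HasDerivAt (fun φ : ℝ => φ / (D * Real.sqrt (D + b * φ ^ 2)))
      ((D + b * x ^ 2) ^ (-(3:ℝ)/2)) x := by
  have hu : 0 < D + b * x ^ 2 := by positivity
  have h1 : HasDerivAt (fun φ : ℝ => D + b * φ ^ 2) (b * (2 * x)) x := by
    simpa using ((hasDerivAt_pow 2 x).const_mul b).const_add D
  have h2 : HasDerivAt (fun φ : ℝ => Real.sqrt (D + b * φ ^ 2))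
      (1 / (2 * Real.sqrt (D + b * x ^ 2)) * (b * (2 * x))) x :=
    (Real.hasDerivAt_sqrt hu.ne').comp x h1
  have h3 : HasDerivAt (fun φ : ℝ => D * Real.sqrt (D + b * φ ^ 2))
      (D * (1 / (2 * Real.sqrt (D + b * x ^ 2)) * (b * (2 * x)))) x := h2.const_mul D
  have hs : 0 < Real.sqrt (D + b * x ^ 2) := Real.sqrt_pos.2 hu
  have h4 := (hasDerivAt_id x).div h3 (by positivity)
  refine h4.congr_deriv (Eq.symm ?_)
  rw [rpow_neg32 hu]
  have hsq : Real.sqrt (D + b * x ^ 2) ^ 2 = D + b * x ^ 2 := Real.sq_sqrt hu.le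
  set t := Real.sqrt (D + b * x ^ 2) with htdef
  rw [show D + b * x ^ 2 = t ^ 2 from hsq.symm, id]
  field_simp
  linear_combination (-1) * hsq

lemma cont32 {D b : ℝ} (hD : 0 < D) (hb : 0 ≤ b) :
    Continuous fun φ : ℝ => (D + b * φ ^ 2) ^ (-(3:ℝ)/2) := by
  apply Continuous.rpow_const (by continuity)
  intro x; left; positivity

lemma int32_le {D b : ℝ} (hD : 0 < D) (hb : 0 < b) :
    (∫ φ in (0:ℝ)..π, (D + b * φ ^ 2) ^ (-(3:ℝ)/2)) ≤ 1 / (Real.sqrt b * D) := by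
  have heq := intervalIntegral.integral_eq_sub_of_hasDerivAt
    (f := fun φ : ℝ => φ / (D * Real.sqrt (D + b * φ ^ 2)))
    (a := 0) (b := π) (fun x _ => hasDeriv32 hD hb.le x)
    ((cont32 hD hb.le).intervalIntegrable 0 π)
  rw [heq]
  have h1 : Real.sqrt b * π ≤ Real.sqrt (D + b * π ^ 2) := by
    rw [show Real.sqrt b * π = Real.sqrt (b * π ^ 2) by
      rw [Real.sqrt_mul hb.le, Real.sqrt_sq pi_pos.le]]
    exact Real.sqrt_le_sqrt (by nlinarith)
  have hsb : 0 < Real.sqrt b := Real.sqrt_pos.2 hb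
  have hS : 0 < Real.sqrt (D + b * π ^ 2) := lt_of_lt_of_le (by positivity) h1
  simp only [zero_div, sub_zero]
  rw [div_le_div_iff₀ (by positivity) (by positivity)]
  nlinarith [pi_pos, h1, hD]

lemma intinv_le {D a : ℝ} (hD : 0 < D) (ha : 0 < a) :
    (∫ θ in (0:ℝ)..π, (D + a * θ ^ 2)⁻¹) ≤ π / (2 * Real.sqrt (a * D)) := by
  set k : ℝ := Real.sqrt a / Real.sqrt D with hk
  have hsa : 0 < Real.sqrt a := Real.sqrt_pos.2 ha
  have hsD : 0 < Real.sqrt D := Real.sqrt_pos.2 hD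
  have hkpos : 0 < k := by positivity
  have hk2 : k ^ 2 = a / D := by
    rw [hk, div_pow, Real.sq_sqrt ha.le, Real.sq_sqrt hD.le]
  have hder : ∀ x : ℝ, HasDerivAt (fun θ : ℝ => Real.arctan (k * θ) * (1 / (k * D)))
      ((D + a * x ^ 2)⁻¹) x := by
    intro x
    have h1 : HasDerivAt (fun θ : ℝ => k * θ) k x := by
      simpa using (hasDerivAt_id x).const_mul k
    have h2 := ((Real.hasDerivAt_arctan (k * x)).comp x h1).mul_const (1 / (k * D))
    refine h2.congr_deriv (Eq.symm ?_)
    have : (0:ℝ) < 1 + (k * x) ^ 2 := by positivity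
    have hk2' : k ^ 2 * D = a := by rw [hk2]; field_simp
    field_simp
    linear_combination x ^ 2 * hk2'
  have hcont : Continuous fun θ : ℝ => (D + a * θ ^ 2)⁻¹ := by
    apply Continuous.inv₀ (by continuity)
    intro x; positivity
  have heq := intervalIntegral.integral_eq_sub_of_hasDerivAt
    (a := 0) (b := π) (fun x _ => hder x) (hcont.intervalIntegrable 0 π)
  rw [heq]
  simp only [mul_zero, Real.arctan_zero, zero_mul, sub_zero]
  have harc : Real.arctan (k * π) ≤ π / 2 := (Real.arctan_lt_pi_div_two _).le
  have hkD : k * D = Real.sqrt (a * D) := by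
    rw [hk, Real.sqrt_mul ha.le]
    field_simp
    rw [Real.sq_sqrt hD.le]
  calc Real.arctan (k * π) * (1 / (k * D)) ≤ (π / 2) * (1 / (k * D)) := by
        apply mul_le_mul_of_nonneg_right harc; positivity
    _ = π / (2 * Real.sqrt (a * D)) := by rw [hkD]; ring


lemma jordan {x : ℝ} (h0 : 0 ≤ x) (h1 : x ≤ π) : 2 / π ^ 2 * x ^ 2 ≤ 1 - Real.cos x := by
  have := Real.cos_le_one_sub_mul_cos_sq (x := x) (by rw [abs_of_nonneg h0]; exact h1)
  linarith

section
variable {r s rb sb : ℝ}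

lemma Xmm_pos (hr : 0 < r) (hs : 0 < s) (hrb : 0 ≤ rb) (hsb : 0 ≤ sb)
    (hD : 0 < (r - rb) ^ 2 + (s - sb) ^ 2) (θ φ : ℝ) : 0 < Xmm r s rb sb θ φ := by
  unfold Xmm
  have h1 : 0 ≤ 2 * r * rb * (1 - Real.cos θ) :=
    mul_nonneg (by positivity) (by nlinarith [Real.cos_le_one θ])
  have h2 : 0 ≤ 2 * s * sb * (1 - Real.cos φ) :=
    mul_nonneg (by positivity) (by nlinarith [Real.cos_le_one φ])
  linarith

lemma contf (hr : 0 < r) (hs : 0 < s) (hrb : 0 ≤ rb) (hsb : 0 ≤ sb)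
    (hD : 0 < (r - rb) ^ 2 + (s - sb) ^ 2) :
    Continuous (fun p : ℝ × ℝ => rb * sb * (Xmm r s rb sb p.1 p.2) ^ (-(3:ℝ)/2)) := by
  apply continuous_const.mul
  have hX : Continuous (fun p : ℝ × ℝ => Xmm r s rb sb p.1 p.2) := by
    unfold Xmm; fun_prop
  exact hX.rpow_const fun p => Or.inl (Xmm_pos hr hs hrb hsb hD p.1 p.2).ne'
lemma boundB (hr : 0 < r) (hs : 0 < s) (hrb : 0 < rb) (hsb : 0 < sb)
    (hD : 0 < (r - rb) ^ 2 + (s - sb) ^ 2) :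
    (∫ θ in (0:ℝ)..π, ∫ φ in (0:ℝ)..π, rb * sb * (Xmm r s rb sb θ φ) ^ (-(3:ℝ)/2)) ≤
      π * (rb * sb / (Real.sqrt (4 * s * sb / π ^ 2) *
        ((r - rb) ^ 2 + (s - sb) ^ 2))) := by
  set D := (r - rb) ^ 2 + (s - sb) ^ 2 with hDdef
  set b := 4 * s * sb / π ^ 2 with hbdef
  have hb : 0 < b := by rw [hbdef]; positivity
  have hf := contf hr hs hrb.le hsb.le hD
  have key : ∀ θ ∈ Set.Icc (0:ℝ) π,
      (∫ φ in (0:ℝ)..π, rb * sb * (Xmm r s rb sb θ φ) ^ (-(3:ℝ)/2)) ≤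
        rb * sb / (Real.sqrt b * D) := by
    intro θ hθ
    calc (∫ φ in (0:ℝ)..π, rb * sb * (Xmm r s rb sb θ φ) ^ (-(3:ℝ)/2))
        ≤ ∫ φ in (0:ℝ)..π, rb * sb * (D + b * φ ^ 2) ^ (-(3:ℝ)/2) := by
          apply intervalIntegral.integral_mono_on pi_pos.le
          · exact ((hf.comp (Continuous.prodMk_right θ)).intervalIntegrable 0 π)
          · exact (continuous_const.mul (cont32 hD hb.le)).intervalIntegrable 0 π
          · intro φ hφ
            apply mul_le_mul_of_nonneg_left _ (by positivity)
            apply Real.rpow_le_rpow_of_nonpos (by positivity) _ (by norm_num)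
            have j2 := jordan hφ.1 hφ.2
            have m2 := mul_le_mul_of_nonneg_left j2 (show (0:ℝ) ≤ 2 * s * sb by positivity)
            have h1 : 0 ≤ 2 * r * rb * (1 - Real.cos θ) :=
              mul_nonneg (by positivity) (by nlinarith [Real.cos_le_one θ])
            have e2 : 2 * s * sb * (2 / π ^ 2 * φ ^ 2) = 4 * s * sb / π ^ 2 * φ ^ 2 := by ring
            unfold Xmm
            rw [hDdef, hbdef]
            linarith [m2, h1]
      _ = rb * sb * ∫ φ in (0:ℝ)..π, (D + b * φ ^ 2) ^ (-(3:ℝ)/2) := by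
          rw [← intervalIntegral.integral_const_mul]
      _ ≤ rb * sb * (1 / (Real.sqrt b * D)) := by
          apply mul_le_mul_of_nonneg_left (int32_le hD hb) (by positivity)
      _ = rb * sb / (Real.sqrt b * D) := by ring
  have hg : Continuous fun θ : ℝ => ∫ φ in (0:ℝ)..π, rb * sb * (Xmm r s rb sb θ φ) ^ (-(3:ℝ)/2) := by
    apply intervalIntegral.continuous_parametric_intervalIntegral_of_continuous' (μ := volume)
    exact hf
  calc (∫ θ in (0:ℝ)..π, ∫ φ in (0:ℝ)..π, rb * sb * (Xmm r s rb sb θ φ) ^ (-(3:ℝ)/2))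
      ≤ ∫ θ in (0:ℝ)..π, rb * sb / (Real.sqrt b * D) :=
        intervalIntegral.integral_mono_on pi_pos.le (hg.intervalIntegrable 0 π)
          (intervalIntegrable_const) key
    _ = π * (rb * sb / (Real.sqrt b * D)) := by
        rw [intervalIntegral.integral_const, smul_eq_mul, sub_zero]

lemma boundC (hr : 0 < r) (hs : 0 < s) (hrb : 0 < rb) (hsb : 0 < sb)
    (hD : 0 < (r - rb) ^ 2 + (s - sb) ^ 2) :
    (∫ θ in (0:ℝ)..π, ∫ φ in (0:ℝ)..π, rb * sb * (Xmm r s rb sb θ φ) ^ (-(3:ℝ)/2)) ≤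
      π * (rb * sb / (Real.sqrt (4 * r * rb / π ^ 2) *
        ((r - rb) ^ 2 + (s - sb) ^ 2))) := by
  set D := (r - rb) ^ 2 + (s - sb) ^ 2 with hDdef
  set a := 4 * r * rb / π ^ 2 with hadef
  have ha : 0 < a := by rw [hadef]; positivity
  have hf := contf hr hs hrb.le hsb.le hD
  have key : ∀ θ ∈ Set.Icc (0:ℝ) π,
      (∫ φ in (0:ℝ)..π, rb * sb * (Xmm r s rb sb θ φ) ^ (-(3:ℝ)/2)) ≤
        π * (rb * sb * (D + a * θ ^ 2) ^ (-(3:ℝ)/2)) := by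
    intro θ hθ
    have hD' : 0 < D + a * θ ^ 2 := by positivity
    calc (∫ φ in (0:ℝ)..π, rb * sb * (Xmm r s rb sb θ φ) ^ (-(3:ℝ)/2))
        ≤ ∫ φ in (0:ℝ)..π, rb * sb * (D + a * θ ^ 2) ^ (-(3:ℝ)/2) := by
          apply intervalIntegral.integral_mono_on pi_pos.le
          · exact ((hf.comp (Continuous.prodMk_right θ)).intervalIntegrable 0 π)
          · exact intervalIntegrable_const
          · intro φ hφ
            apply mul_le_mul_of_nonneg_left _ (by positivity)
            apply Real.rpow_le_rpow_of_nonpos (by positivity) _ (by norm_num)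
            have j1 := jordan hθ.1 hθ.2
            have m1 := mul_le_mul_of_nonneg_left j1 (show (0:ℝ) ≤ 2 * r * rb by positivity)
            have h2 : 0 ≤ 2 * s * sb * (1 - Real.cos φ) :=
              mul_nonneg (by positivity) (by nlinarith [Real.cos_le_one φ])
            have e1 : 2 * r * rb * (2 / π ^ 2 * θ ^ 2) = 4 * r * rb / π ^ 2 * θ ^ 2 := by ring
            unfold Xmm
            rw [hDdef, hadef]
            linarith [m1, h2]
      _ = π * (rb * sb * (D + a * θ ^ 2) ^ (-(3:ℝ)/2)) := by
          rw [intervalIntegral.integral_const, smul_eq_mul, sub_zero]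
  have hg : Continuous fun θ : ℝ => ∫ φ in (0:ℝ)..π, rb * sb * (Xmm r s rb sb θ φ) ^ (-(3:ℝ)/2) := by
    apply intervalIntegral.continuous_parametric_intervalIntegral_of_continuous' (μ := volume)
    exact hf
  have hh : Continuous fun θ : ℝ => π * (rb * sb * (D + a * θ ^ 2) ^ (-(3:ℝ)/2)) :=
    continuous_const.mul (continuous_const.mul (cont32 hD ha.le))
  calc (∫ θ in (0:ℝ)..π, ∫ φ in (0:ℝ)..π, rb * sb * (Xmm r s rb sb θ φ) ^ (-(3:ℝ)/2))
      ≤ ∫ θ in (0:ℝ)..π, π * (rb * sb * (D + a * θ ^ 2) ^ (-(3:ℝ)/2)) :=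
        intervalIntegral.integral_mono_on pi_pos.le (hg.intervalIntegrable 0 π)
          (hh.intervalIntegrable 0 π) key
    _ = π * rb * sb * ∫ θ in (0:ℝ)..π, (D + a * θ ^ 2) ^ (-(3:ℝ)/2) := by
        rw [← intervalIntegral.integral_const_mul]
        congr 1; funext θ; ring
    _ ≤ π * rb * sb * (1 / (Real.sqrt a * D)) := by
        apply mul_le_mul_of_nonneg_left (int32_le hD ha) (by positivity)
    _ = π * (rb * sb / (Real.sqrt a * D)) := by ring

end

section
variable {r s rb sb : ℝ}

lemma boundA (hr : 0 < r) (hs : 0 < s) (hrb : 0 < rb) (hsb : 0 < sb)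
    (hD : 0 < (r - rb) ^ 2 + (s - sb) ^ 2) :
    (∫ θ in (0:ℝ)..π, ∫ φ in (0:ℝ)..π, rb * sb * (Xmm r s rb sb θ φ) ^ (-(3:ℝ)/2)) ≤
      rb * sb / Real.sqrt (4 * s * sb / π ^ 2) *
        (π / (2 * Real.sqrt ((4 * r * rb / π ^ 2) * ((r - rb) ^ 2 + (s - sb) ^ 2)))) := by
  set D := (r - rb) ^ 2 + (s - sb) ^ 2 with hDdef
  set a := 4 * r * rb / π ^ 2 with hadef
  set b := 4 * s * sb / π ^ 2 with hbdef
  have ha : 0 < a := by rw [hadef]; positivity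
  have hb : 0 < b := by rw [hbdef]; positivity
  have hf := contf hr hs hrb.le hsb.le hD
  have key : ∀ θ ∈ Set.Icc (0:ℝ) π,
      (∫ φ in (0:ℝ)..π, rb * sb * (Xmm r s rb sb θ φ) ^ (-(3:ℝ)/2)) ≤
        rb * sb / Real.sqrt b * (D + a * θ ^ 2)⁻¹ := by
    intro θ hθ
    have hD' : 0 < D + a * θ ^ 2 := by positivity
    calc (∫ φ in (0:ℝ)..π, rb * sb * (Xmm r s rb sb θ φ) ^ (-(3:ℝ)/2))
        ≤ ∫ φ in (0:ℝ)..π, rb * sb * ((D + a * θ ^ 2) + b * φ ^ 2) ^ (-(3:ℝ)/2) := by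
          apply intervalIntegral.integral_mono_on pi_pos.le
          · exact ((hf.comp (Continuous.prodMk_right θ)).intervalIntegrable 0 π)
          · exact (continuous_const.mul (cont32 hD' hb.le)).intervalIntegrable 0 π
          · intro φ hφ
            apply mul_le_mul_of_nonneg_left _ (by positivity)
            apply Real.rpow_le_rpow_of_nonpos (by positivity) _ (by norm_num)
            have j1 := jordan hθ.1 hθ.2
            have j2 := jordan hφ.1 hφ.2
            have m1 := mul_le_mul_of_nonneg_left j1 (show (0:ℝ) ≤ 2 * r * rb by positivity)
            have m2 := mul_le_mul_of_nonneg_left j2 (show (0:ℝ) ≤ 2 * s * sb by positivity)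
            have hπ := Real.pi_pos
            unfold Xmm
            rw [hDdef, hadef, hbdef]
            have e1 : 2 * r * rb * (2 / π ^ 2 * θ ^ 2) = 4 * r * rb / π ^ 2 * θ ^ 2 := by ring
            have e2 : 2 * s * sb * (2 / π ^ 2 * φ ^ 2) = 4 * s * sb / π ^ 2 * φ ^ 2 := by ring
            linarith [m1, m2]
      _ = rb * sb * ∫ φ in (0:ℝ)..π, ((D + a * θ ^ 2) + b * φ ^ 2) ^ (-(3:ℝ)/2) := by
          rw [← intervalIntegral.integral_const_mul]
      _ ≤ rb * sb * (1 / (Real.sqrt b * (D + a * θ ^ 2))) := by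
          apply mul_le_mul_of_nonneg_left (int32_le hD' hb) (by positivity)
      _ = rb * sb / Real.sqrt b * (D + a * θ ^ 2)⁻¹ := by
          field_simp
  have hg : Continuous fun θ : ℝ => ∫ φ in (0:ℝ)..π, rb * sb * (Xmm r s rb sb θ φ) ^ (-(3:ℝ)/2) := by
    apply intervalIntegral.continuous_parametric_intervalIntegral_of_continuous' (μ := volume)
    exact hf
  have hh : Continuous fun θ : ℝ => rb * sb / Real.sqrt b * (D + a * θ ^ 2)⁻¹ := by
    apply continuous_const.mul
    apply Continuous.inv₀ (by fun_prop)
    intro x; positivity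
  calc (∫ θ in (0:ℝ)..π, ∫ φ in (0:ℝ)..π, rb * sb * (Xmm r s rb sb θ φ) ^ (-(3:ℝ)/2))
      ≤ ∫ θ in (0:ℝ)..π, rb * sb / Real.sqrt b * (D + a * θ ^ 2)⁻¹ :=
        intervalIntegral.integral_mono_on pi_pos.le (hg.intervalIntegrable 0 π)
          (hh.intervalIntegrable 0 π) key
    _ = rb * sb / Real.sqrt b * ∫ θ in (0:ℝ)..π, (D + a * θ ^ 2)⁻¹ := by
        rw [← intervalIntegral.integral_const_mul]
    _ ≤ rb * sb / Real.sqrt b * (π / (2 * Real.sqrt (a * D))) := by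
        apply mul_le_mul_of_nonneg_left (intinv_le hD ha) (by positivity)

end

section
variable {r s rb sb : ℝ}

lemma finalA (hr : 0 < r) (hs : 0 < s) (hrb : 0 < rb) (hsb : 0 < sb)
    (hD : 0 < (r - rb) ^ 2 + (s - sb) ^ 2) :
    (∫ θ in (0:ℝ)..π, ∫ φ in (0:ℝ)..π, rb * sb * (Xmm r s rb sb θ φ) ^ (-(3:ℝ)/2)) ≤
      π ^ 3 / 8 * Real.sqrt (rb * sb / (r * s)) *
        ((r - rb) ^ 2 + (s - sb) ^ 2) ^ (-(1:ℝ)/2) := by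
  have h := boundA hr hs hrb hsb hD
  set D := (r - rb) ^ 2 + (s - sb) ^ 2 with hDdef
  set sD := Real.sqrt D with hsDdef
  have hsD : 0 < sD := Real.sqrt_pos.2 hD
  have hDe : D ^ (-(1:ℝ)/2) = sD⁻¹ := by
    rw [show (-(1:ℝ)/2) = -(1/2) by norm_num, Real.rpow_neg hD.le, hsDdef, Real.sqrt_eq_rpow]
  refine h.trans (le_of_eq ?_)
  rw [hDe]
  set sr := Real.sqrt r with hsr
  set ss := Real.sqrt s with hss
  set srb := Real.sqrt rb with hsrb
  set ssb := Real.sqrt sb with hssb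
  have h1 : 0 < sr := Real.sqrt_pos.2 hr
  have h2 : 0 < ss := Real.sqrt_pos.2 hs
  have h3 : 0 < srb := Real.sqrt_pos.2 hrb
  have h4 : 0 < ssb := Real.sqrt_pos.2 hsb
  have hπ := Real.pi_pos
  rw [show r = sr ^ 2 from (Real.sq_sqrt hr.le).symm,
      show s = ss ^ 2 from (Real.sq_sqrt hs.le).symm,
      show rb = srb ^ 2 from (Real.sq_sqrt hrb.le).symm,
      show sb = ssb ^ 2 from (Real.sq_sqrt hsb.le).symm,
      show D = sD ^ 2 from (Real.sq_sqrt hD.le).symm]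
  rw [show 4 * ss ^ 2 * ssb ^ 2 / π ^ 2 = (2 / π * (ss * ssb)) ^ 2 by ring,
      Real.sqrt_sq (by positivity),
      show 4 * (sr ^ 2) * srb ^ 2 / π ^ 2 * (sD ^ 2) = (2 / π * (sr * srb) * sD) ^ 2 by ring,
      Real.sqrt_sq (by positivity),
      show srb ^ 2 * ssb ^ 2 / (sr ^ 2 * ss ^ 2) = (srb * ssb / (sr * ss)) ^ 2 by ring,
      Real.sqrt_sq (by positivity)]
  field_simp
  ring

lemma finalB (hr : 0 < r) (hs : 0 < s) (hrb : 0 < rb) (hsb : 0 < sb)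
    (hD : 0 < (r - rb) ^ 2 + (s - sb) ^ 2) (h2r : 2 * r < rb) :
    (∫ θ in (0:ℝ)..π, ∫ φ in (0:ℝ)..π, rb * sb * (Xmm r s rb sb θ φ) ^ (-(3:ℝ)/2)) ≤
      π ^ 3 * Real.sqrt (sb / s) * ((r - rb) ^ 2 + (s - sb) ^ 2) ^ (-(1:ℝ)/2) := by
  have h := boundB hr hs hrb hsb hD
  set D := (r - rb) ^ 2 + (s - sb) ^ 2 with hDdef
  set sD := Real.sqrt D with hsDdef
  have hsD : 0 < sD := Real.sqrt_pos.2 hD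
  have hDe : D ^ (-(1:ℝ)/2) = sD⁻¹ := by
    rw [show (-(1:ℝ)/2) = -(1/2) by norm_num, Real.rpow_neg hD.le, hsDdef, Real.sqrt_eq_rpow]
  have hrble : rb ≤ 2 * sD := by
    have h1 : (rb / 2) ^ 2 ≤ D := by rw [hDdef]; nlinarith
    have h2 : rb / 2 ≤ sD := by
      rw [show rb / 2 = Real.sqrt ((rb / 2) ^ 2) from (Real.sqrt_sq (by linarith)).symm, hsDdef]
      exact Real.sqrt_le_sqrt h1
    linarith
  refine h.trans ?_
  rw [hDe]
  set ss := Real.sqrt s with hss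
  set ssb := Real.sqrt sb with hssb
  have h2 : 0 < ss := Real.sqrt_pos.2 hs
  have h4 : 0 < ssb := Real.sqrt_pos.2 hsb
  have hπ := Real.pi_gt_three
  have hπ0 := Real.pi_pos
  rw [show s = ss ^ 2 from (Real.sq_sqrt hs.le).symm,
      show sb = ssb ^ 2 from (Real.sq_sqrt hsb.le).symm,
      show D = sD ^ 2 from (Real.sq_sqrt hD.le).symm]
  rw [show 4 * ss ^ 2 * ssb ^ 2 / π ^ 2 = (2 / π * (ss * ssb)) ^ 2 by ring,
      Real.sqrt_sq (by positivity),
      show ssb ^ 2 / ss ^ 2 = (ssb / ss) ^ 2 by ring,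
      Real.sqrt_sq (by positivity)]
  rw [show π * (rb * ssb ^ 2 / (2 / π * (ss * ssb) * sD ^ 2)) =
        π ^ 2 * rb * ssb / (2 * ss * sD ^ 2) by field_simp,
      show π ^ 3 * (ssb / ss) * sD⁻¹ = π ^ 3 * ssb * sD / (ss * sD ^ 2) by field_simp,
      div_le_div_iff₀ (by positivity) (by positivity)]
  nlinarith [mul_le_mul_of_nonneg_left hrble (by positivity : (0:ℝ) ≤ π ^ 2 * ssb * ss * sD ^ 2),
    mul_pos (mul_pos (mul_pos h2 h4) hsD) (mul_pos hsD hsD),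
    mul_pos (mul_pos hπ0 hπ0) (mul_pos (mul_pos h2 h4) (mul_pos hsD (mul_pos hsD hsD)))]

lemma finalC (hr : 0 < r) (hs : 0 < s) (hrb : 0 < rb) (hsb : 0 < sb)
    (hD : 0 < (r - rb) ^ 2 + (s - sb) ^ 2) (h2s : 2 * s < sb) :
    (∫ θ in (0:ℝ)..π, ∫ φ in (0:ℝ)..π, rb * sb * (Xmm r s rb sb θ φ) ^ (-(3:ℝ)/2)) ≤
      π ^ 3 * Real.sqrt (rb / r) * ((r - rb) ^ 2 + (s - sb) ^ 2) ^ (-(1:ℝ)/2) := by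
  have h := boundC hr hs hrb hsb hD
  set D := (r - rb) ^ 2 + (s - sb) ^ 2 with hDdef
  set sD := Real.sqrt D with hsDdef
  have hsD : 0 < sD := Real.sqrt_pos.2 hD
  have hDe : D ^ (-(1:ℝ)/2) = sD⁻¹ := by
    rw [show (-(1:ℝ)/2) = -(1/2) by norm_num, Real.rpow_neg hD.le, hsDdef, Real.sqrt_eq_rpow]
  have hsble : sb ≤ 2 * sD := by
    have h1 : (sb / 2) ^ 2 ≤ D := by rw [hDdef]; nlinarith
    have h2 : sb / 2 ≤ sD := by
      rw [show sb / 2 = Real.sqrt ((sb / 2) ^ 2) from (Real.sqrt_sq (by linarith)).symm, hsDdef]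
      exact Real.sqrt_le_sqrt h1
    linarith
  refine h.trans ?_
  rw [hDe]
  set sr := Real.sqrt r with hsr
  set srb := Real.sqrt rb with hsrb
  have h1 : 0 < sr := Real.sqrt_pos.2 hr
  have h3 : 0 < srb := Real.sqrt_pos.2 hrb
  have hπ := Real.pi_gt_three
  have hπ0 := Real.pi_pos
  rw [show r = sr ^ 2 from (Real.sq_sqrt hr.le).symm,
      show rb = srb ^ 2 from (Real.sq_sqrt hrb.le).symm,
      show D = sD ^ 2 from (Real.sq_sqrt hD.le).symm]
  rw [show 4 * sr ^ 2 * srb ^ 2 / π ^ 2 = (2 / π * (sr * srb)) ^ 2 by ring,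
      Real.sqrt_sq (by positivity),
      show srb ^ 2 / sr ^ 2 = (srb / sr) ^ 2 by ring,
      Real.sqrt_sq (by positivity)]
  rw [show π * (srb ^ 2 * sb / (2 / π * (sr * srb) * sD ^ 2)) =
        π ^ 2 * sb * srb / (2 * sr * sD ^ 2) by field_simp,
      show π ^ 3 * (srb / sr) * sD⁻¹ = π ^ 3 * srb * sD / (sr * sD ^ 2) by field_simp,
      div_le_div_iff₀ (by positivity) (by positivity)]
  nlinarith [mul_le_mul_of_nonneg_left hsble (by positivity : (0:ℝ) ≤ π ^ 2 * srb * sr * sD ^ 2),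
    mul_pos (mul_pos (mul_pos h1 h3) hsD) (mul_pos hsD hsD),
    mul_pos (mul_pos hπ0 hπ0) (mul_pos (mul_pos h1 h3) (mul_pos hsD (mul_pos hsD hsD)))]

end

lemma one_le_sqrt_two : (1:ℝ) ≤ Real.sqrt 2 := by
  nlinarith [Real.sq_sqrt (by norm_num : (0:ℝ) ≤ 2), Real.sqrt_nonneg 2]

lemma sqrt_two_le_two : Real.sqrt 2 ≤ 2 := by
  nlinarith [Real.sq_sqrt (by norm_num : (0:ℝ) ≤ 2), Real.sqrt_nonneg 2]

set_option maxHeartbeats 2000000 in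
/-- There is an absolute constant `C > 0` such that for all `r, s > 0`
and all `r̄, s̄ ≥ 0` with `(r,s) ≠ (r̄,s̄)`,
`∫₀^π ∫₀^π r̄ s̄ X₋₋^{−3/2} dφ̄ dθ̄
  ≤ C · min{ (r̄s̄/(rs))^{1/2}, (s̄/s)^{1/2}, (r̄/r)^{1/2} } · ((r−r̄)² + (s−s̄)²)^{−1/2}`. -/
theorem stmt_1 :
    ∃ C : ℝ, 0 < C ∧ ∀ r s rb sb : ℝ, 0 < r → 0 < s → 0 ≤ rb → 0 ≤ sb →
      (r, s) ≠ (rb, sb) →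
      (∫ θ in (0:ℝ)..Real.pi, ∫ φ in (0:ℝ)..Real.pi,
          rb * sb * (Xmm r s rb sb θ φ) ^ (-(3:ℝ)/2)) ≤
        C * min (min (Real.sqrt (rb * sb / (r * s))) (Real.sqrt (sb / s)))
            (Real.sqrt (rb / r)) *
          ((r - rb) ^ 2 + (s - sb) ^ 2) ^ (-(1:ℝ)/2) := by
  refine ⟨π ^ 3, by positivity, fun r s rb sb hr hs hrb hsb hne => ?_⟩
  have hD : 0 < (r - rb) ^ 2 + (s - sb) ^ 2 := by
    rcases lt_or_eq_of_le (by positivity : (0:ℝ) ≤ (r - rb) ^ 2 + (s - sb) ^ 2) with h | h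
    · exact h
    · exfalso
      apply hne
      have h1 : (r - rb) ^ 2 = 0 := by nlinarith [sq_nonneg (r - rb), sq_nonneg (s - sb)]
      have h2 : (s - sb) ^ 2 = 0 := by nlinarith [sq_nonneg (r - rb), sq_nonneg (s - sb)]
      have e1 : r = rb := by nlinarith [sq_nonneg (r - rb)]
      have e2 : s = sb := by nlinarith [sq_nonneg (s - sb)]
      rw [Prod.mk.injEq]
      exact ⟨e1, e2⟩
  set P := Real.sqrt (rb * sb / (r * s)) with hP
  set B' := Real.sqrt (sb / s) with hB
  set A' := Real.sqrt (rb / r) with hA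
  set E := ((r - rb) ^ 2 + (s - sb) ^ 2) ^ (-(1:ℝ)/2) with hE
  have hEnn : 0 ≤ E := Real.rpow_nonneg (by positivity) _
  clear_value P B' A' E
  have hPnn0 : 0 ≤ P := by rw [hP]; exact Real.sqrt_nonneg _
  have hBnn0 : 0 ≤ B' := by rw [hB]; exact Real.sqrt_nonneg _
  have hAnn0 : 0 ≤ A' := by rw [hA]; exact Real.sqrt_nonneg _
  have hmnn : 0 ≤ min (min P B') A' := le_min (le_min hPnn0 hBnn0) hAnn0
  -- degenerate cases
  rcases eq_or_lt_of_le hrb with hrb0 | hrb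
  · have hzero : (∫ θ in (0:ℝ)..π, ∫ φ in (0:ℝ)..π,
        rb * sb * (Xmm r s rb sb θ φ) ^ (-(3:ℝ)/2)) = 0 := by
      rw [← hrb0]
      simp only [zero_mul, intervalIntegral.integral_zero]
    rw [hzero]
    positivity
  rcases eq_or_lt_of_le hsb with hsb0 | hsb
  · have hzero : (∫ θ in (0:ℝ)..π, ∫ φ in (0:ℝ)..π,
        rb * sb * (Xmm r s rb sb θ φ) ^ (-(3:ℝ)/2)) = 0 := by
      rw [← hsb0]
      simp only [mul_zero, zero_mul, intervalIntegral.integral_zero]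
    rw [hzero]
    positivity
  have hPAB : P = A' * B' := by
    rw [hP, hA, hB, ← Real.sqrt_mul (by positivity), div_mul_div_comm]
  have hsqrt2 : Real.sqrt 2 ≤ 2 := sqrt_two_le_two
  have hπ0 := Real.pi_pos
  by_cases h1 : rb ≤ 2 * r
  · have hA2 : A' ≤ Real.sqrt 2 := by
      rw [hA]
      exact Real.sqrt_le_sqrt (by rw [div_le_iff₀ hr]; linarith)
    by_cases h2 : sb ≤ 2 * s
    · -- case A
      have hB2 : B' ≤ Real.sqrt 2 := by
        rw [hB]
        exact Real.sqrt_le_sqrt (by rw [div_le_iff₀ hs]; linarith)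
      have hm : P / 8 ≤ min (min P B') A' := by
        have hBnn : 0 ≤ B' := hBnn0
        have hAnn : 0 ≤ A' := hAnn0
        have hPle1 : P ≤ 2 * B' := by
          rw [hPAB]
          nlinarith
        have hPle2 : P ≤ 2 * A' := by
          rw [hPAB]
          nlinarith
        have hPnn : 0 ≤ P := hPnn0
        exact le_min (le_min (by linarith) (by linarith)) (by linarith)
      have := finalA hr hs hrb hsb hD
      refine this.trans ?_
      rw [← hP, ← hE]
      apply mul_le_mul_of_nonneg_right _ hEnn
      linarith [mul_le_mul_of_nonneg_left hm (by positivity : (0:ℝ) ≤ π ^ 3)]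
    · -- case C with sb > 2s, rb ≤ 2r
      push_neg at h2
      have hB2 : Real.sqrt 2 ≤ B' := by
        rw [hB]
        exact Real.sqrt_le_sqrt (by rw [le_div_iff₀ hs]; linarith)
      have hB1 : 1 ≤ B' := by
        linarith [one_le_sqrt_two]
      have hm : A' ≤ min (min P B') A' := by
        have hAnn : 0 ≤ A' := hAnn0
        refine le_min (le_min ?_ (hA2.trans hB2)) le_rfl
        rw [hPAB]; nlinarith
      have := finalC hr hs hrb hsb hD h2
      refine this.trans ?_
      rw [← hA, ← hE]
      apply mul_le_mul_of_nonneg_right _ hEnn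
      apply mul_le_mul_of_nonneg_left hm (by positivity)
  · -- rb > 2r
    push_neg at h1
    have hA2 : Real.sqrt 2 ≤ A' := by
      rw [hA]
      exact Real.sqrt_le_sqrt (by rw [le_div_iff₀ hr]; linarith)
    have hA1 : 1 ≤ A' := by
      linarith [one_le_sqrt_two]
    rcases le_total B' A' with hBA | hAB
    · -- case B
      have hm : B' ≤ min (min P B') A' := by
        have hBnn : 0 ≤ B' := hBnn0
        refine le_min (le_min ?_ le_rfl) hBA
        rw [hPAB]; nlinarith
      have := finalB hr hs hrb hsb hD h1
      refine this.trans ?_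
      rw [← hB, ← hE]
      apply mul_le_mul_of_nonneg_right _ hEnn
      apply mul_le_mul_of_nonneg_left hm (by positivity)
    · -- case C : A' ≤ B', derive sb > 2s
      have h2s : 2 * s < sb := by
        have hgt : 2 < rb / r := by rw [lt_div_iff₀ hr]; linarith
        have hAsq : A' ^ 2 = rb / r := by rw [hA]; exact Real.sq_sqrt (by positivity)
        have hBsq : B' ^ 2 = sb / s := by rw [hB]; exact Real.sq_sqrt (by positivity)
        have hlt : 2 < B' ^ 2 := by
          nlinarith [mul_self_le_mul_self hAnn0 hAB]
        rw [hBsq, lt_div_iff₀ hs] at hlt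
        linarith
      have hm : A' ≤ min (min P B') A' := by
        have hAnn : 0 ≤ A' := hAnn0
        have hB1 : 1 ≤ B' := hA1.trans hAB
        refine le_min (le_min ?_ hAB) le_rfl
        rw [hPAB]; nlinarith
      have := finalC hr hs hrb hsb hD h2s
      refine this.trans ?_
      rw [← hA, ← hE]
      apply mul_le_mul_of_nonneg_right _ hEnn
      apply mul_le_mul_of_nonneg_left hm (by positivity)
end

section
/- There exists an absolute constant C > 0 such that for all r, s > 0 and all r̄, s̄ ≥ 0 with (r, s) ≠ (r̄, s̄), one has ∫₀^π ∫₀^π r̄ · (s s̄ (1 − cos φ̄))^{1/2} · X₋₋^{−3/2} dφ̄ dθ̄ ≤ C · min{ (r̄/r)^{1/2}, 1 } · ((r − r̄)² + (s − s̄)²)^{−1/2}. -/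
open MeasureTheory Real

/-- Arctan-type integral bound. -/
lemma aux_int {a α : ℝ} (ha : 0 < a) (hα : 0 < α) :
    (∫ θ in (0:ℝ)..Real.pi, (a + α * θ ^ 2)⁻¹) ≤ Real.pi / (2 * Real.sqrt (a * α)) := by
  set c := Real.sqrt (α / a) with hc
  have hc0 : 0 < c := Real.sqrt_pos.mpr (by positivity)
  have hcsq : c ^ 2 = α / a := Real.sq_sqrt (by positivity)
  have key : ∀ θ : ℝ, (a + α * θ ^ 2)⁻¹ = a⁻¹ * (1 + (θ * c) ^ 2)⁻¹ := by
    intro θ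
    rw [← mul_inv]
    congr 1
    rw [mul_add, mul_one, mul_pow, hcsq]
    field_simp
  have hac : a * c = Real.sqrt (a * α) := by
    rw [show a * α = a ^ 2 * (α / a) by field_simp, Real.sqrt_mul (sq_nonneg a),
      Real.sqrt_sq ha.le, hc]
  calc (∫ θ in (0:ℝ)..Real.pi, (a + α * θ ^ 2)⁻¹)
      = ∫ θ in (0:ℝ)..Real.pi, a⁻¹ * (1 + (θ * c) ^ 2)⁻¹ :=
        intervalIntegral.integral_congr (fun θ _ => key θ)
    _ = a⁻¹ * ∫ θ in (0:ℝ)..Real.pi, (1 + (θ * c) ^ 2)⁻¹ :=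
        intervalIntegral.integral_const_mul _ _
    _ = a⁻¹ * (c⁻¹ • ∫ x in (0:ℝ) * c..Real.pi * c, (1 + x ^ 2)⁻¹) := by
        rw [intervalIntegral.integral_comp_mul_right (fun x => (1 + x ^ 2)⁻¹) hc0.ne']
    _ = a⁻¹ * c⁻¹ * Real.arctan (Real.pi * c) := by
        rw [integral_inv_one_add_sq]
        simp [smul_eq_mul, mul_assoc]
    _ ≤ a⁻¹ * c⁻¹ * (Real.pi / 2) := by
        have := (Real.arctan_lt_pi_div_two (Real.pi * c)).le
        have h0 : (0:ℝ) ≤ a⁻¹ * c⁻¹ := by positivity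
        exact mul_le_mul_of_nonneg_left this h0
    _ = Real.pi / (2 * Real.sqrt (a * α)) := by
        rw [← hac]
        rw [eq_div_iff (by positivity)]
        field_simp

/-- Core pointwise bound: `√w · (A+2w)^{-3/2} ≤ (√2 · A)⁻¹`. -/
lemma aux_pt {A w : ℝ} (hA : 0 < A) (hw : 0 ≤ w) :
    Real.sqrt w * (A + 2 * w) ^ (-(3:ℝ)/2) ≤ (Real.sqrt 2 * A)⁻¹ := by
  set X := A + 2 * w with hXdef
  have hX : 0 < X := by simp only [hXdef]; linarith
  have h32 : X ^ (-(3:ℝ)/2) = (X ^ ((3:ℝ)/2))⁻¹ := by rw [neg_div, Real.rpow_neg hX.le]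
  have hX32 : X ^ ((3:ℝ)/2) = X * Real.sqrt X := by
    rw [show (3:ℝ)/2 = 1 + 1/2 by norm_num, Real.rpow_add hX, Real.rpow_one,
      ← Real.sqrt_eq_rpow]
  have key : Real.sqrt w * (Real.sqrt 2 * A) ≤ X * Real.sqrt X := by
    have h1 : Real.sqrt w * Real.sqrt 2 = Real.sqrt (w * 2) := (Real.sqrt_mul hw 2).symm
    have h2 : Real.sqrt (w * 2) ≤ Real.sqrt X := Real.sqrt_le_sqrt (by simp only [hXdef]; linarith)
    calc Real.sqrt w * (Real.sqrt 2 * A) = Real.sqrt w * Real.sqrt 2 * A := by ring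
      _ ≤ Real.sqrt X * X := by
          refine mul_le_mul (h1 ▸ h2) ?_ hA.le (Real.sqrt_nonneg X)
          simp only [hXdef]; linarith
      _ = X * Real.sqrt X := mul_comm _ _
  have hp1 : 0 < X * Real.sqrt X := mul_pos hX (Real.sqrt_pos.mpr hX)
  have hp2 : 0 < Real.sqrt 2 * A := mul_pos (Real.sqrt_pos.mpr two_pos) hA
  rw [h32, hX32, ← div_eq_mul_inv,
    show (Real.sqrt 2 * A)⁻¹ = 1 / (Real.sqrt 2 * A) by rw [one_div],
    div_le_div_iff₀ hp1 hp2]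
  linarith [key]

lemma pi_sq_le_sixteen : Real.pi ^ 2 ≤ 16 := by nlinarith [Real.pi_le_four, Real.pi_pos]

lemma pi_cube_le_sixtyfour : Real.pi ^ 3 ≤ 64 := by
  nlinarith [pi_sq_le_sixteen, Real.pi_le_four, Real.pi_pos]

/-- There is an absolute constant `C > 0` such that for all `r, s > 0`
and all `r̄, s̄ ≥ 0` with `(r,s) ≠ (r̄,s̄)`,
`∫₀^π ∫₀^π r̄ (s s̄ (1 − cos φ̄))^{1/2} X₋₋^{−3/2} dφ̄ dθ̄
  ≤ C · min{ (r̄/r)^{1/2}, 1 } · ((r−r̄)² + (s−s̄)²)^{−1/2}`. -/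
theorem stmt_2 :
    ∃ C : ℝ, 0 < C ∧ ∀ r s rb sb : ℝ, 0 < r → 0 < s → 0 ≤ rb → 0 ≤ sb →
      (r, s) ≠ (rb, sb) →
      (∫ θ in (0:ℝ)..Real.pi, ∫ φ in (0:ℝ)..Real.pi,
          rb * Real.sqrt (s * sb * (1 - Real.cos φ)) * (Xmm r s rb sb θ φ) ^ (-(3:ℝ)/2)) ≤
        C * min (Real.sqrt (rb / r)) 1 *
          ((r - rb) ^ 2 + (s - sb) ^ 2) ^ (-(1:ℝ)/2) := by
  refine ⟨100, by norm_num, ?_⟩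
  intro r s rb sb hr hs hrb hsb hne
  set a : ℝ := (r - rb) ^ 2 + (s - sb) ^ 2 with hadef
  have ha : 0 < a := by
    have hne' : r ≠ rb ∨ s ≠ sb := by
      by_contra h
      push_neg at h
      exact hne (by rw [h.1, h.2])
    rcases hne' with h | h
    · have h1 : (0:ℝ) < (r - rb) ^ 2 := by
        have h0 : r - rb ≠ 0 := sub_ne_zero.mpr h
        positivity
      have h2 : (0:ℝ) ≤ (s - sb) ^ 2 := sq_nonneg _
      simp only [hadef]; linarith
    · have h1 : (0:ℝ) < (s - sb) ^ 2 := by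
        have h0 : s - sb ≠ 0 := sub_ne_zero.mpr h
        positivity
      have h2 : (0:ℝ) ≤ (r - rb) ^ 2 := sq_nonneg _
      simp only [hadef]; linarith
  clear_value a
  have hsa : 0 < Real.sqrt a := Real.sqrt_pos.mpr ha
  have hrpowa : a ^ (-(1:ℝ)/2) = (Real.sqrt a)⁻¹ := by
    rw [neg_div, Real.rpow_neg ha.le, ← Real.sqrt_eq_rpow]
  have hsqrt2 : (1:ℝ) ≤ Real.sqrt 2 := by
    rw [show (1:ℝ) = Real.sqrt 1 by simp]
    exact Real.sqrt_le_sqrt one_le_two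
  have hs2pos : (0:ℝ) < Real.sqrt 2 := by linarith
  have hXpos : ∀ θ φ : ℝ, 0 < Xmm r s rb sb θ φ := by
    intro θ φ
    have h1 := Real.cos_le_one θ
    have h2 := Real.cos_le_one φ
    have ha' : (0:ℝ) < (r - rb) ^ 2 + (s - sb) ^ 2 := by rw [← hadef]; exact ha
    have h3 : (0:ℝ) ≤ 2 * r * rb * (1 - Real.cos θ) :=
      mul_nonneg (by positivity) (by linarith)
    have h4 : (0:ℝ) ≤ 2 * s * sb * (1 - Real.cos φ) :=
      mul_nonneg (by positivity) (by linarith)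
    unfold Xmm
    linarith
  set F : ℝ → ℝ → ℝ := fun θ φ =>
    rb * Real.sqrt (s * sb * (1 - Real.cos φ)) * Xmm r s rb sb θ φ ^ (-(3:ℝ)/2) with hFdef
  have hFcont : Continuous (Function.uncurry F) := by
    rw [Function.uncurry_def]
    have hXc : Continuous (fun p : ℝ × ℝ => Xmm r s rb sb p.1 p.2) := by
      unfold Xmm; fun_prop
    have h1 : Continuous (fun p : ℝ × ℝ => Xmm r s rb sb p.1 p.2 ^ (-(3:ℝ)/2)) :=
      hXc.rpow_const (fun p => Or.inl (hXpos p.1 p.2).ne')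
    have h2 : Continuous (fun p : ℝ × ℝ => Real.sqrt (s * sb * (1 - Real.cos p.2))) := by
      fun_prop
    simp only [hFdef]
    exact (continuous_const.mul h2).mul h1
  have key : ∀ ψ : ℝ → ℝ, Continuous ψ →
      (∀ θ ∈ Set.Icc (0:ℝ) Real.pi, ∀ φ, F θ φ ≤ ψ θ) →
      (∫ θ in (0:ℝ)..Real.pi, ∫ φ in (0:ℝ)..Real.pi, F θ φ)
        ≤ Real.pi * ∫ θ in (0:ℝ)..Real.pi, ψ θ := by
    intro ψ hψ hle
    have hFint : ∀ θ : ℝ, IntervalIntegrable (F θ) volume 0 Real.pi := by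
      intro θ
      exact (hFcont.comp (Continuous.prodMk_right θ)).intervalIntegrable 0 Real.pi
    have step1 : ∀ θ ∈ Set.Icc (0:ℝ) Real.pi,
        (∫ φ in (0:ℝ)..Real.pi, F θ φ) ≤ Real.pi * ψ θ := by
      intro θ hθ
      calc (∫ φ in (0:ℝ)..Real.pi, F θ φ) ≤ ∫ _ in (0:ℝ)..Real.pi, ψ θ :=
            intervalIntegral.integral_mono_on Real.pi_nonneg (hFint θ)
              intervalIntegrable_const (fun φ _ => hle θ hθ φ)
        _ = Real.pi * ψ θ := by
            rw [intervalIntegral.integral_const, smul_eq_mul, sub_zero]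
    calc (∫ θ in (0:ℝ)..Real.pi, ∫ φ in (0:ℝ)..Real.pi, F θ φ)
        ≤ ∫ θ in (0:ℝ)..Real.pi, Real.pi * ψ θ :=
          intervalIntegral.integral_mono_on Real.pi_nonneg
            ((intervalIntegral.continuous_parametric_intervalIntegral_of_continuous'
              hFcont 0 Real.pi).intervalIntegrable 0 Real.pi)
            ((continuous_const.mul hψ).intervalIntegrable 0 Real.pi) step1
      _ = Real.pi * ∫ θ in (0:ℝ)..Real.pi, ψ θ := intervalIntegral.integral_const_mul _ _
  have hpt : ∀ (θ φ b : ℝ), 0 < b → b ≤ a + 2 * r * rb * (1 - Real.cos θ) →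
      F θ φ ≤ rb * (Real.sqrt 2 * b)⁻¹ := by
    intro θ φ b hb hbA
    have hA : 0 < a + 2 * r * rb * (1 - Real.cos θ) := lt_of_lt_of_le hb hbA
    have hcosφ : (0:ℝ) ≤ 1 - Real.cos φ := by linarith [Real.cos_le_one φ]
    have hw : 0 ≤ s * sb * (1 - Real.cos φ) := mul_nonneg (mul_nonneg hs.le hsb) hcosφ
    have hXeq : Xmm r s rb sb θ φ
        = (a + 2 * r * rb * (1 - Real.cos θ)) + 2 * (s * sb * (1 - Real.cos φ)) := by
      simp only [hadef, Xmm]; ring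
    have h1 := aux_pt hA hw
    have h2 : (Real.sqrt 2 * (a + 2 * r * rb * (1 - Real.cos θ)))⁻¹ ≤ (Real.sqrt 2 * b)⁻¹ := by
      apply inv_anti₀ (mul_pos hs2pos hb)
      exact mul_le_mul_of_nonneg_left hbA (Real.sqrt_nonneg 2)
    calc F θ φ = rb * (Real.sqrt (s * sb * (1 - Real.cos φ)) *
          ((a + 2 * r * rb * (1 - Real.cos θ)) + 2 * (s * sb * (1 - Real.cos φ)))
            ^ (-(3:ℝ)/2)) := by
          simp only [hFdef, hXeq]; ring
      _ ≤ rb * (Real.sqrt 2 * (a + 2 * r * rb * (1 - Real.cos θ)))⁻¹ :=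
          mul_le_mul_of_nonneg_left h1 hrb
      _ ≤ rb * (Real.sqrt 2 * b)⁻¹ := mul_le_mul_of_nonneg_left h2 hrb
  show (∫ θ in (0:ℝ)..Real.pi, ∫ φ in (0:ℝ)..Real.pi, F θ φ)
      ≤ 100 * min (Real.sqrt (rb / r)) 1 * a ^ (-(1:ℝ)/2)
  clear_value F
  rcases eq_or_lt_of_le hrb with hrb0 | hrb0
  · -- rb = 0 : both sides vanish
    have hL : (∫ θ in (0:ℝ)..Real.pi, ∫ φ in (0:ℝ)..Real.pi, F θ φ) = 0 := by
      simp [hFdef, ← hrb0]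
    rw [hL, ← hrb0]
    have : Real.sqrt ((0:ℝ) / r) = 0 := by simp
    rw [this]
    have hm : min (0:ℝ) 1 = 0 := min_eq_left zero_le_one
    rw [hm, mul_zero, zero_mul]
  · -- 0 < rb
    have hQ : 0 < Real.sqrt (r * rb) := Real.sqrt_pos.mpr (by positivity)
    have ht : Real.sqrt (rb / r) = rb / Real.sqrt (r * rb) := by
      rw [show rb / r = rb ^ 2 / (r * rb) by field_simp,
        Real.sqrt_div (sq_nonneg rb), Real.sqrt_sq hrb0.le]
    set t := Real.sqrt (rb / r) with htdef
    have ht0 : 0 ≤ t := Real.sqrt_nonneg _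
    set m := min t 1 with hmdef
    have hm0 : 0 ≤ m := le_min ht0 zero_le_one
    clear_value t m
    rw [hrpowa]
    rcases le_or_gt rb (2 * r) with hcase | hcase
    · -- rb ≤ 2r : use the arctan integral
      set α : ℝ := 4 * r * rb / Real.pi ^ 2 with hαdef
      have hα : 0 < α := by rw [hαdef]; positivity
      clear_value α
      have hden : ∀ θ : ℝ, 0 < a + α * θ ^ 2 := by
        intro θ
        have := mul_nonneg hα.le (sq_nonneg θ)
        linarith
      have hψcont : Continuous fun θ : ℝ => rb * (Real.sqrt 2 * (a + α * θ ^ 2))⁻¹ := by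
        apply continuous_const.mul
        apply Continuous.inv₀
        · fun_prop
        · exact fun θ => (mul_pos hs2pos (hden θ)).ne'
      have hle : ∀ θ ∈ Set.Icc (0:ℝ) Real.pi, ∀ φ,
          F θ φ ≤ rb * (Real.sqrt 2 * (a + α * θ ^ 2))⁻¹ := by
        intro θ hθ φ
        apply hpt θ φ _ (hden θ)
        have hcos : Real.cos θ ≤ 1 - 2 / Real.pi ^ 2 * θ ^ 2 :=
          Real.cos_le_one_sub_mul_cos_sq (by rw [abs_of_nonneg hθ.1]; exact hθ.2)
        have hstep : α * θ ^ 2 ≤ 2 * r * rb * (1 - Real.cos θ) := by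
          have h2 : 2 / Real.pi ^ 2 * θ ^ 2 ≤ 1 - Real.cos θ := by linarith
          calc α * θ ^ 2 = (2 * r * rb) * (2 / Real.pi ^ 2 * θ ^ 2) := by
                simp only [hαdef]; field_simp; ring
            _ ≤ (2 * r * rb) * (1 - Real.cos θ) :=
                mul_le_mul_of_nonneg_left h2 (by positivity)
            _ = 2 * r * rb * (1 - Real.cos θ) := by ring
        linarith
      have hmain := key _ hψcont hle
      have heq : (∫ θ in (0:ℝ)..Real.pi, rb * (Real.sqrt 2 * (a + α * θ ^ 2))⁻¹)
          = rb * (Real.sqrt 2)⁻¹ * ∫ θ in (0:ℝ)..Real.pi, (a + α * θ ^ 2)⁻¹ := by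
        rw [← intervalIntegral.integral_const_mul]
        apply intervalIntegral.integral_congr
        intro θ _
        show rb * (Real.sqrt 2 * (a + α * θ ^ 2))⁻¹
          = rb * (Real.sqrt 2)⁻¹ * (a + α * θ ^ 2)⁻¹
        rw [mul_inv]
        ring
      have hint := aux_int ha hα
      have hI : (∫ θ in (0:ℝ)..Real.pi, ∫ φ in (0:ℝ)..Real.pi, F θ φ)
          ≤ Real.pi * (rb * (Real.sqrt 2)⁻¹ * (Real.pi / (2 * Real.sqrt (a * α)))) := by
        calc (∫ θ in (0:ℝ)..Real.pi, ∫ φ in (0:ℝ)..Real.pi, F θ φ)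
            ≤ Real.pi * ∫ θ in (0:ℝ)..Real.pi, rb * (Real.sqrt 2 * (a + α * θ ^ 2))⁻¹ := hmain
          _ = Real.pi * (rb * (Real.sqrt 2)⁻¹ * ∫ θ in (0:ℝ)..Real.pi, (a + α * θ ^ 2)⁻¹) := by
              rw [heq]
          _ ≤ Real.pi * (rb * (Real.sqrt 2)⁻¹ * (Real.pi / (2 * Real.sqrt (a * α)))) := by
              apply mul_le_mul_of_nonneg_left _ Real.pi_nonneg
              exact mul_le_mul_of_nonneg_left hint (by positivity)
      have hsqrtα : Real.sqrt α = 2 * Real.sqrt (r * rb) / Real.pi := by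
        rw [show α = (2 * Real.sqrt (r * rb) / Real.pi) ^ 2 by
          rw [div_pow, mul_pow, Real.sq_sqrt (by positivity : (0:ℝ) ≤ r * rb)]
          simp only [hαdef]; ring,
          Real.sqrt_sq (by positivity)]
      have hsqrtaα : Real.sqrt (a * α) = Real.sqrt a * (2 * Real.sqrt (r * rb) / Real.pi) := by
        rw [Real.sqrt_mul ha.le, hsqrtα]
      have htm : t ≤ Real.sqrt 2 * m := by
        rcases le_or_gt t 1 with h | h
        · rw [hmdef, min_eq_left h]
          exact le_mul_of_one_le_left ht0 hsqrt2
        · rw [hmdef, min_eq_right h.le]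
          have : rb / r ≤ 2 := by rw [div_le_iff₀ hr]; linarith
          calc t ≤ Real.sqrt 2 := by
                rw [htdef]; exact Real.sqrt_le_sqrt this
            _ = Real.sqrt 2 * 1 := by ring
      have hrbt : rb = t * Real.sqrt (r * rb) := by
        rw [ht]
        field_simp
      refine le_trans hI ?_
      rw [hsqrtaα]
      have hfin : Real.pi * (rb * (Real.sqrt 2)⁻¹ *
          (Real.pi / (2 * (Real.sqrt a * (2 * Real.sqrt (r * rb) / Real.pi)))))
          = Real.pi ^ 3 * rb / (4 * Real.sqrt 2 * Real.sqrt (r * rb) * Real.sqrt a) := by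
        field_simp
        ring
      rw [hfin]
      rw [div_le_iff₀ (by positivity)]
      have hexp : 100 * m * (Real.sqrt a)⁻¹ * (4 * Real.sqrt 2 * Real.sqrt (r * rb) * Real.sqrt a)
          = 400 * Real.sqrt 2 * m * Real.sqrt (r * rb) := by
        field_simp
        ring
      rw [hexp]
      have h1 : t * Real.sqrt (r * rb) ≤ Real.sqrt 2 * m * Real.sqrt (r * rb) :=
        mul_le_mul_of_nonneg_right htm hQ.le
      have hy : (0:ℝ) ≤ Real.sqrt 2 * m * Real.sqrt (r * rb) := by positivity
      have hπ3 : Real.pi ^ 3 ≤ 64 := pi_cube_le_sixtyfour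
      calc Real.pi ^ 3 * rb = Real.pi ^ 3 * (t * Real.sqrt (r * rb)) := by rw [← hrbt]
        _ ≤ Real.pi ^ 3 * (Real.sqrt 2 * m * Real.sqrt (r * rb)) :=
            mul_le_mul_of_nonneg_left h1 (by positivity)
        _ ≤ 64 * (Real.sqrt 2 * m * Real.sqrt (r * rb)) :=
            mul_le_mul_of_nonneg_right hπ3 hy
        _ ≤ 400 * Real.sqrt 2 * m * Real.sqrt (r * rb) := by linarith [hy]
    · -- rb > 2r : crude bound
      have hle : ∀ θ ∈ Set.Icc (0:ℝ) Real.pi, ∀ φ,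
          F θ φ ≤ rb * (Real.sqrt 2 * a)⁻¹ := by
        intro θ hθ φ
        apply hpt θ φ a ha
        have hcos : (0:ℝ) ≤ 1 - Real.cos θ := by linarith [Real.cos_le_one θ]
        have h0 : (0:ℝ) ≤ 2 * r * rb * (1 - Real.cos θ) :=
          mul_nonneg (by positivity) hcos
        linarith
      have hmain := key _ continuous_const hle
      have hconst : (∫ _ in (0:ℝ)..Real.pi, rb * (Real.sqrt 2 * a)⁻¹)
          = Real.pi * (rb * (Real.sqrt 2 * a)⁻¹) := by
        rw [intervalIntegral.integral_const, smul_eq_mul, sub_zero]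
      have hm1 : m = 1 := by
        rw [hmdef, min_eq_right]
        rw [htdef, show (1:ℝ) = Real.sqrt 1 by simp]
        apply Real.sqrt_le_sqrt
        rw [le_div_iff₀ hr]
        linarith
      have hrbsa : rb ≤ 2 * Real.sqrt a := by
        have h1 : rb - r ≤ |r - rb| := by
          rw [abs_sub_comm]
          exact le_abs_self _
        have h2 : |r - rb| ≤ Real.sqrt a := by
          rw [← Real.sqrt_sq_eq_abs]
          apply Real.sqrt_le_sqrt
          simp only [hadef]
          nlinarith [sq_nonneg (s - sb)]
        linarith
      refine le_trans hmain ?_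
      rw [hconst, hm1]
      have haeq : a = Real.sqrt a * Real.sqrt a := (Real.mul_self_sqrt ha.le).symm
      have hfin : Real.pi * (Real.pi * (rb * (Real.sqrt 2 * a)⁻¹))
          = Real.pi ^ 2 * rb / (Real.sqrt 2 * a) := by
        field_simp
      rw [hfin, div_le_iff₀ (by positivity)]
      have hexp : 100 * 1 * (Real.sqrt a)⁻¹ * (Real.sqrt 2 * a)
          = 100 * Real.sqrt 2 * Real.sqrt a := by
        nth_rewrite 2 [haeq]
        rw [show (100:ℝ) * 1 * (Real.sqrt a)⁻¹ * (Real.sqrt 2 * (Real.sqrt a * Real.sqrt a))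
          = 100 * Real.sqrt 2 * ((Real.sqrt a)⁻¹ * Real.sqrt a) * Real.sqrt a by ring,
          inv_mul_cancel₀ hsa.ne', mul_one]
      rw [hexp]
      calc Real.pi ^ 2 * rb ≤ 16 * rb :=
            mul_le_mul_of_nonneg_right pi_sq_le_sixteen hrb0.le
        _ ≤ 16 * (2 * Real.sqrt a) := mul_le_mul_of_nonneg_left hrbsa (by norm_num)
        _ = 32 * Real.sqrt a := by ring
        _ ≤ 100 * Real.sqrt 2 * Real.sqrt a := by
            linarith [mul_le_mul_of_nonneg_right hsqrt2 hsa.le,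
              mul_nonneg (Real.sqrt_nonneg 2) hsa.le]
end

section
/- There exists an absolute constant C > 0 such that for every (r, s) ∈ Π with r² + s² = 1 and every (r̄, s̄) ∈ Π with D := (r − r̄)² + (s − s̄)² ≥ 1/64, the following hold: (i) |F^r(r, s, r̄, s̄)| ≤ C · D^{−1}; (ii) if moreover r̄ ≤ r + 2 and s̄ ≤ s + 2, then |F^r(r, s, r̄, s̄)| ≤ C · D^{−3}; (iii) if exactly one of the inequalities r̄ > r + 2, s̄ > s + 2 holds, then |F^r(r, s, r̄, s̄)| ≤ C · D^{−2}. -/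
open MeasureTheory Real

/-- The Biot–Savart kernel `F^r` of the bi-rotational Euler flow:
`F^r(r,s,r̄,s̄) = (2/π²) ∫₀^π ∫₀^π r̄ s̄ cos θ̄ (s̄ − s cos φ̄) X₋₋^{−2} dφ̄ dθ̄`. -/
noncomputable def Fr (r s rb sb : ℝ) : ℝ :=
  (2 / Real.pi ^ 2) * ∫ θ in (0:ℝ)..Real.pi, ∫ φ in (0:ℝ)..Real.pi,
    rb * sb * Real.cos θ * (sb - s * Real.cos φ) / (Xmm r s rb sb θ φ) ^ 2

noncomputable def fk (r s rb sb θ φ : ℝ) : ℝ :=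
  rb * sb * Real.cos θ * (sb - s * Real.cos φ) / (Xmm r s rb sb θ φ) ^ 2

noncomputable def ak (r s rb sb φ : ℝ) : ℝ :=
  (r - rb) ^ 2 + (s - sb) ^ 2 + 2 * s * sb * (1 - Real.cos φ)

noncomputable def gk (r s rb sb θ φ : ℝ) : ℝ :=
  Real.cos θ * (rb * sb * (sb - s * Real.cos φ) / (ak r s rb sb φ) ^ 2)

lemma ak_ge (r s rb sb : ℝ) (hs : 0 ≤ s) (hsb : 0 ≤ sb) (φ : ℝ) :
    (r - rb) ^ 2 + (s - sb) ^ 2 ≤ ak r s rb sb φ := by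
  have h1 : (0:ℝ) ≤ 1 - Real.cos φ := by linarith [Real.cos_le_one φ]
  have h2 := mul_nonneg (mul_nonneg hs hsb) h1
  unfold ak; nlinarith

lemma Xmm_eq (r s rb sb θ φ : ℝ) :
    Xmm r s rb sb θ φ = ak r s rb sb φ + 2 * r * rb * (1 - Real.cos θ) := by
  unfold Xmm ak; ring

lemma Xmm_ge (r s rb sb : ℝ) (hr : 0 ≤ r) (hs : 0 ≤ s) (hrb : 0 ≤ rb) (hsb : 0 ≤ sb)
    (θ φ : ℝ) : (r - rb) ^ 2 + (s - sb) ^ 2 ≤ Xmm r s rb sb θ φ := by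
  have h1 : (0:ℝ) ≤ 1 - Real.cos θ := by linarith [Real.cos_le_one θ]
  have h2 := mul_nonneg (mul_nonneg hr hrb) h1
  rw [Xmm_eq]
  have := ak_ge r s rb sb hs hsb φ
  nlinarith

lemma inv_sq_diff (a c : ℝ) (ha : 0 < a) (hc : 0 ≤ c) :
    |1 / (a + c) ^ 2 - 1 / a ^ 2| ≤ 2 * c / a ^ 3 := by
  have hac : 0 < a + c := by linarith
  have h1 : 1 / (a + c) ^ 2 ≤ 1 / a ^ 2 := by
    apply one_div_le_one_div_of_le (by positivity)
    nlinarith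
  rw [abs_of_nonpos (by linarith), neg_sub]
  rw [div_sub_div _ _ (by positivity) (by positivity),
    div_le_div_iff₀ (by positivity) (by positivity)]
  nlinarith [mul_nonneg (mul_nonneg (pow_nonneg ha.le 3) hc) hc,
    mul_nonneg (mul_nonneg (mul_nonneg (sq_nonneg a) hc) hc) hc]

lemma abs_sb_sub (s sb x : ℝ) (hs : 0 ≤ s) (hsb : 0 ≤ sb) (hx : |x| ≤ 1) :
    |sb - s * x| ≤ sb + s := by
  rw [abs_le] at hx ⊢
  constructor <;> nlinarith

lemma fk_sub_gk_bound (r s rb sb : ℝ) (hr : 0 ≤ r) (hs : 0 ≤ s) (hrb : 0 ≤ rb)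
    (hsb : 0 ≤ sb) (hD0 : 0 < (r - rb) ^ 2 + (s - sb) ^ 2) (θ φ : ℝ) :
    |fk r s rb sb θ φ - gk r s rb sb θ φ|
      ≤ rb * sb * (sb + s) * (8 * r * rb) / ((r - rb) ^ 2 + (s - sb) ^ 2) ^ 3 := by
  have haφ := ak_ge r s rb sb hs hsb φ
  have haφ0 : 0 < ak r s rb sb φ := lt_of_lt_of_le hD0 haφ
  have hXθφ := Xmm_ge r s rb sb hr hs hrb hsb θ φ
  have hX0 : 0 < Xmm r s rb sb θ φ := lt_of_lt_of_le hD0 hXθφ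
  have hc1 : (0:ℝ) ≤ 1 - Real.cos θ := by linarith [Real.cos_le_one θ]
  have hc0 : 0 ≤ 2 * r * rb * (1 - Real.cos θ) :=
    mul_nonneg (by positivity) hc1
  have hc4 : 2 * r * rb * (1 - Real.cos θ) ≤ 4 * r * rb := by
    have := Real.neg_one_le_cos θ
    nlinarith [mul_nonneg hr hrb]
  have hinv : |1 / (Xmm r s rb sb θ φ) ^ 2 - 1 / (ak r s rb sb φ) ^ 2|
      ≤ 8 * r * rb / ((r - rb) ^ 2 + (s - sb) ^ 2) ^ 3 := by
    have h1 := inv_sq_diff (ak r s rb sb φ) (2 * r * rb * (1 - Real.cos θ)) haφ0 hc0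
    rw [← Xmm_eq] at h1
    have h2 : 2 * (2 * r * rb * (1 - Real.cos θ)) / (ak r s rb sb φ) ^ 3
        ≤ 8 * r * rb / ((r - rb) ^ 2 + (s - sb) ^ 2) ^ 3 := by
      apply div_le_div₀ (by positivity) (by linarith) (by positivity)
      exact pow_le_pow_left₀ hD0.le haφ 3
    linarith
  have heq : fk r s rb sb θ φ - gk r s rb sb θ φ = rb * sb * Real.cos θ *
      (sb - s * Real.cos φ) * (1 / (Xmm r s rb sb θ φ) ^ 2 - 1 / (ak r s rb sb φ) ^ 2) := by
    unfold fk gk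
    field_simp
  rw [heq, abs_mul]
  have h3 : |rb * sb * Real.cos θ * (sb - s * Real.cos φ)| ≤ rb * sb * (sb + s) := by
    rw [abs_mul]
    have h4 := abs_sb_sub s sb (Real.cos φ) hs hsb (Real.abs_cos_le_one φ)
    have h5 : |rb * sb * Real.cos θ| ≤ rb * sb := by
      rw [abs_mul, abs_of_nonneg (by positivity : (0:ℝ) ≤ rb * sb)]
      have := mul_le_mul_of_nonneg_left (Real.abs_cos_le_one θ)
        (by positivity : (0:ℝ) ≤ rb * sb)
      linarith
    have h6 := mul_le_mul h5 h4 (abs_nonneg _) (by positivity : (0:ℝ) ≤ rb * sb)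
    linarith
  have h7 := mul_le_mul h3 hinv (abs_nonneg _)
    (by positivity : (0:ℝ) ≤ rb * sb * (sb + s))
  refine le_trans h7 (le_of_eq (by ring))

lemma cont_fk (r s rb sb : ℝ) (hr : 0 ≤ r) (hs : 0 ≤ s) (hrb : 0 ≤ rb) (hsb : 0 ≤ sb)
    (hD0 : 0 < (r - rb) ^ 2 + (s - sb) ^ 2) :
    Continuous fun p : ℝ × ℝ => fk r s rb sb p.1 p.2 := by
  unfold fk
  apply Continuous.div (by fun_prop) (by unfold Xmm; fun_prop)
  intro p
  have h := lt_of_lt_of_le hD0 (Xmm_ge r s rb sb hr hs hrb hsb p.1 p.2)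
  positivity

lemma cont_gk (r s rb sb : ℝ) (hs : 0 ≤ s) (hsb : 0 ≤ sb)
    (hD0 : 0 < (r - rb) ^ 2 + (s - sb) ^ 2) :
    Continuous fun p : ℝ × ℝ => gk r s rb sb p.1 p.2 := by
  unfold gk
  apply Continuous.mul (by fun_prop)
  apply Continuous.div (by fun_prop) (by unfold ak; fun_prop)
  intro p
  have h := lt_of_lt_of_le hD0 (ak_ge r s rb sb hs hsb p.2)
  positivity

lemma key_bound (r s rb sb : ℝ) (hr : 0 ≤ r) (hs : 0 ≤ s) (hrb : 0 ≤ rb) (hsb : 0 ≤ sb)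
    (hD0 : 0 < (r - rb) ^ 2 + (s - sb) ^ 2) :
    |Fr r s rb sb| ≤ 16 * r * rb ^ 2 * sb * (sb + s) / ((r - rb) ^ 2 + (s - sb) ^ 2) ^ 3 := by
  have hcontf := cont_fk r s rb sb hr hs hrb hsb hD0
  have hcontg := cont_gk r s rb sb hs hsb hD0
  have hIf : ∀ θ, IntervalIntegrable (fun φ => fk r s rb sb θ φ) volume 0 Real.pi :=
    fun θ => (hcontf.comp (Continuous.prodMk_right θ)).intervalIntegrable _ _
  have hIg : ∀ θ, IntervalIntegrable (fun φ => gk r s rb sb θ φ) volume 0 Real.pi :=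
    fun θ => (hcontg.comp (Continuous.prodMk_right θ)).intervalIntegrable _ _
  set M : ℝ := rb * sb * (sb + s) * (8 * r * rb) / ((r - rb) ^ 2 + (s - sb) ^ 2) ^ 3 with hM_def
  have hM0 : 0 ≤ M := by positivity
  obtain ⟨K, hK⟩ : ∃ K : ℝ, (∫ φ in (0:ℝ)..Real.pi,
      rb * sb * (sb - s * Real.cos φ) / (ak r s rb sb φ) ^ 2) = K := ⟨_, rfl⟩
  have hg_int : ∀ θ, (∫ φ in (0:ℝ)..Real.pi, gk r s rb sb θ φ) = Real.cos θ * K := by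
    intro θ
    rw [← hK, ← intervalIntegral.integral_const_mul]
    rfl
  have hcontA : Continuous fun θ => ∫ φ in (0:ℝ)..Real.pi,
      (fk r s rb sb θ φ - gk r s rb sb θ φ) := by
    apply intervalIntegral.continuous_parametric_intervalIntegral_of_continuous'
    exact hcontf.sub hcontg
  have houter : (∫ θ in (0:ℝ)..Real.pi, ∫ φ in (0:ℝ)..Real.pi, fk r s rb sb θ φ)
      = ∫ θ in (0:ℝ)..Real.pi, ∫ φ in (0:ℝ)..Real.pi,
          (fk r s rb sb θ φ - gk r s rb sb θ φ) := by
    have h1 : (∫ θ in (0:ℝ)..Real.pi, ∫ φ in (0:ℝ)..Real.pi, fk r s rb sb θ φ)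
        = ∫ θ in (0:ℝ)..Real.pi,
            ((∫ φ in (0:ℝ)..Real.pi, (fk r s rb sb θ φ - gk r s rb sb θ φ))
              + Real.cos θ * K) := by
      apply intervalIntegral.integral_congr
      intro θ _
      show (∫ φ in (0:ℝ)..Real.pi, fk r s rb sb θ φ)
        = (∫ φ in (0:ℝ)..Real.pi, (fk r s rb sb θ φ - gk r s rb sb θ φ)) + Real.cos θ * K
      rw [← hg_int θ, intervalIntegral.integral_sub (hIf θ) (hIg θ)]
      ring
    rw [h1, intervalIntegral.integral_add (hcontA.intervalIntegrable _ _)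
      (by apply Continuous.intervalIntegrable; fun_prop)]
    have h2 : (∫ θ in (0:ℝ)..Real.pi, Real.cos θ * K) = 0 := by
      rw [intervalIntegral.integral_mul_const, integral_cos]
      simp
    rw [h2, add_zero]
  have hbound : |∫ θ in (0:ℝ)..Real.pi, ∫ φ in (0:ℝ)..Real.pi,
      (fk r s rb sb θ φ - gk r s rb sb θ φ)| ≤ (Real.pi * M) * Real.pi := by
    have h1 := intervalIntegral.norm_integral_le_of_norm_le_const (C := Real.pi * M)
      (f := fun θ => ∫ φ in (0:ℝ)..Real.pi, (fk r s rb sb θ φ - gk r s rb sb θ φ))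
      (a := 0) (b := Real.pi) ?_
    · simpa [abs_of_nonneg Real.pi_nonneg] using h1
    · intro θ _
      have h2 := intervalIntegral.norm_integral_le_of_norm_le_const (C := M)
        (f := fun φ => fk r s rb sb θ φ - gk r s rb sb θ φ) (a := 0) (b := Real.pi) ?_
      · simpa [abs_of_nonneg Real.pi_nonneg, mul_comm] using h2
      · intro φ _
        simpa using fk_sub_gk_bound r s rb sb hr hs hrb hsb hD0 θ φ
  have hfr : Fr r s rb sb = (2 / Real.pi ^ 2) *
      ∫ θ in (0:ℝ)..Real.pi, ∫ φ in (0:ℝ)..Real.pi, fk r s rb sb θ φ := rfl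
  calc |Fr r s rb sb|
      = 2 / Real.pi ^ 2 * |∫ θ in (0:ℝ)..Real.pi, ∫ φ in (0:ℝ)..Real.pi,
          (fk r s rb sb θ φ - gk r s rb sb θ φ)| := by
        rw [hfr, houter, abs_mul, abs_of_pos (by positivity : (0:ℝ) < 2 / Real.pi ^ 2)]
    _ ≤ 2 / Real.pi ^ 2 * ((Real.pi * M) * Real.pi) :=
        mul_le_mul_of_nonneg_left hbound (by positivity)
    _ = 2 * M := by
        have := Real.pi_ne_zero
        field_simp
    _ = 16 * r * rb ^ 2 * sb * (sb + s) / ((r - rb) ^ 2 + (s - sb) ^ 2) ^ 3 := by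
        rw [hM_def]; ring

lemma prod_bound {r rb sb t A B C E : ℝ} (hr0 : 0 ≤ r) (hrb0 : 0 ≤ rb) (hsb0 : 0 ≤ sb)
    (ht0 : 0 ≤ t) (hA : r ≤ A) (hB : rb ≤ B) (hC : sb ≤ C) (hE : t ≤ E) :
    16 * r * rb ^ 2 * sb * t ≤ 16 * A * B ^ 2 * C * E := by
  have hA0 : 0 ≤ A := hr0.trans hA
  have hB0 : 0 ≤ B := hrb0.trans hB
  have hC0 : 0 ≤ C := hsb0.trans hC
  have hE0 : 0 ≤ E := ht0.trans hE
  have h1 : rb ^ 2 ≤ B ^ 2 := by nlinarith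
  have h2 : 16 * r ≤ 16 * A := by linarith
  have h3 : 16 * r * rb ^ 2 ≤ 16 * A * B ^ 2 :=
    mul_le_mul h2 h1 (by positivity) (by positivity)
  have h4 : 16 * r * rb ^ 2 * sb ≤ 16 * A * B ^ 2 * C :=
    mul_le_mul h3 hC hsb0 (by positivity)
  exact mul_le_mul h4 hE ht0 (by positivity)

/-- There is an absolute constant `C > 0` such that for every `(r,s) ∈ Π`
with `r² + s² = 1` and every `(r̄,s̄) ∈ Π` with `D := (r−r̄)² + (s−s̄)² ≥ 1/64`:
(i) `|F^r| ≤ C·D^{−1}`; (ii) if `r̄ ≤ r+2` and `s̄ ≤ s+2` then `|F^r| ≤ C·D^{−3}`;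
(iii) if exactly one of `r̄ > r+2`, `s̄ > s+2` holds, then `|F^r| ≤ C·D^{−2}`. -/
theorem stmt_4 :
    ∃ C : ℝ, 0 < C ∧ ∀ r s rb sb : ℝ, 0 ≤ r → 0 ≤ s → r ^ 2 + s ^ 2 = 1 →
      0 ≤ rb → 0 ≤ sb → 1 / 64 ≤ (r - rb) ^ 2 + (s - sb) ^ 2 →
      (|Fr r s rb sb| ≤ C / ((r - rb) ^ 2 + (s - sb) ^ 2)) ∧
      (rb ≤ r + 2 → sb ≤ s + 2 →
        |Fr r s rb sb| ≤ C / ((r - rb) ^ 2 + (s - sb) ^ 2) ^ 3) ∧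
      ((r + 2 < rb ∧ sb ≤ s + 2) ∨ (rb ≤ r + 2 ∧ s + 2 < sb) →
        |Fr r s rb sb| ≤ C / ((r - rb) ^ 2 + (s - sb) ^ 2) ^ 2) := by
  refine ⟨200000, by norm_num, ?_⟩
  intro r s rb sb hr hs hrs hrb hsb hD
  have hD0 : (0:ℝ) < (r - rb) ^ 2 + (s - sb) ^ 2 := lt_of_lt_of_le (by norm_num) hD
  have key := key_bound r s rb sb hr hs hrb hsb hD0
  set D := (r - rb) ^ 2 + (s - sb) ^ 2 with hDdef
  have hr1 : r ≤ 1 := by nlinarith [sq_nonneg s]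
  have hs1 : s ≤ 1 := by nlinarith [sq_nonneg r]
  obtain ⟨u, hu0, hu2⟩ : ∃ u : ℝ, 0 ≤ u ∧ u ^ 2 = D :=
    ⟨Real.sqrt D, Real.sqrt_nonneg D, Real.sq_sqrt hD0.le⟩
  have hu8 : 1 / 8 ≤ u := by nlinarith
  have hDr : (r - rb) ^ 2 ≤ u ^ 2 := by rw [hu2, hDdef]; nlinarith [sq_nonneg (s - sb)]
  have hDs : (s - sb) ^ 2 ≤ u ^ 2 := by rw [hu2, hDdef]; nlinarith [sq_nonneg (r - rb)]
  have hrbu : rb ≤ 1 + u := by nlinarith [sq_nonneg (rb - r - u)]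
  have hsbu : sb ≤ 1 + u := by nlinarith [sq_nonneg (sb - s - u)]
  have hrb9 : rb ≤ 9 * u := by linarith
  have hsb9 : sb ≤ 9 * u := by linarith
  have hss17 : sb + s ≤ 17 * u := by linarith
  clear_value D
  have hss0 : 0 ≤ sb + s := add_nonneg hsb hs
  have hD3 : (0:ℝ) < D ^ 3 := by positivity
  refine ⟨?_, ?_, ?_⟩
  · -- (i)
    have hP : 16 * r * rb ^ 2 * sb * (sb + s) ≤ 198288 * D ^ 2 := by
      have h1 := prod_bound hr hrb hsb hss0 hr1 hrb9 hsb9 hss17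
      have h2 : 16 * 1 * (9 * u) ^ 2 * (9 * u) * (17 * u) = 198288 * (u ^ 2) ^ 2 := by ring
      rw [h2, hu2] at h1
      exact h1
    calc |Fr r s rb sb| ≤ 16 * r * rb ^ 2 * sb * (sb + s) / D ^ 3 := key
      _ ≤ 198288 * D ^ 2 / D ^ 3 := by gcongr
      _ = 198288 / D := by rw [div_eq_div_iff hD3.ne' hD0.ne']; ring
      _ ≤ 200000 / D := by gcongr <;> norm_num
  · -- (ii)
    intro hrb2 hsb2
    have hP : 16 * r * rb ^ 2 * sb * (sb + s) ≤ 200000 := by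
      have h1 := prod_bound hr hrb hsb hss0 hr1 (show rb ≤ 3 by linarith)
        (show sb ≤ 3 by linarith) (show sb + s ≤ 4 by linarith)
      norm_num at h1
      linarith
    calc |Fr r s rb sb| ≤ 16 * r * rb ^ 2 * sb * (sb + s) / D ^ 3 := key
      _ ≤ 200000 / D ^ 3 := by gcongr
  · -- (iii)
    have hiii : ∀ c : ℝ, 16 * r * rb ^ 2 * sb * (sb + s) ≤ c * D → c ≤ 200000 →
        |Fr r s rb sb| ≤ 200000 / D ^ 2 := by
      intro c hc hc2
      calc |Fr r s rb sb| ≤ 16 * r * rb ^ 2 * sb * (sb + s) / D ^ 3 := key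
        _ ≤ c * D / D ^ 3 := by gcongr
        _ = c / D ^ 2 := by rw [div_eq_div_iff hD3.ne' (by positivity : (D:ℝ)^2 ≠ 0)]; ring
        _ ≤ 200000 / D ^ 2 := by gcongr
    rintro (⟨h1, h2⟩ | ⟨h1, h2⟩)
    · refine hiii 15552 ?_ (by norm_num)
      have ha := prod_bound hr hrb hsb hss0 hr1 hrb9
        (show sb ≤ 3 by linarith) (show sb + s ≤ 4 by linarith)
      have hb : 16 * 1 * (9 * u) ^ 2 * 3 * 4 = 15552 * u ^ 2 := by ring
      rw [hb, hu2] at ha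
      exact ha
    · refine hiii 22032 ?_ (by norm_num)
      have ha := prod_bound hr hrb hsb hss0 hr1 (show rb ≤ 3 by linarith) hsb9 hss17
      have hb : 16 * 1 * 3 ^ 2 * (9 * u) * (17 * u) = 22032 * u ^ 2 := by ring
      rw [hb, hu2] at ha
      exact ha
end

section
/- For all r, s, r̄, s̄ ≥ 0 with (r, s) ≠ (r̄, s̄), the Biot–Savart kernel admits the symmetrized representation F^r(r, s, r̄, s̄) = (16 r / π²) ∫₀^{π/2} ∫₀^{π/2} r̄² s̄ cos² θ̄ · [ (s̄ − s cos φ̄) · Y₋ / (X₋₋² X₊₋²) + (s̄ + s cos φ̄) · Y₊ / (X₋₊² X₊₊²) ] dφ̄ dθ̄. -/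
open MeasureTheory Real

/-- `X₊₋ = (r−r̄)² + (s−s̄)² + 2rr̄(1+cos θ̄) + 2ss̄(1−cos φ̄)`. -/
noncomputable def Xpm (r s rb sb θ φ : ℝ) : ℝ :=
  (r - rb) ^ 2 + (s - sb) ^ 2 + 2 * r * rb * (1 + Real.cos θ) + 2 * s * sb * (1 - Real.cos φ)

/-- `X₋₊ = (r−r̄)² + (s−s̄)² + 2rr̄(1−cos θ̄) + 2ss̄(1+cos φ̄)`. -/
noncomputable def Xmp (r s rb sb θ φ : ℝ) : ℝ :=
  (r - rb) ^ 2 + (s - sb) ^ 2 + 2 * r * rb * (1 - Real.cos θ) + 2 * s * sb * (1 + Real.cos φ)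

/-- `X₊₊ = (r−r̄)² + (s−s̄)² + 2rr̄(1+cos θ̄) + 2ss̄(1+cos φ̄)`. -/
noncomputable def Xpp (r s rb sb θ φ : ℝ) : ℝ :=
  (r - rb) ^ 2 + (s - sb) ^ 2 + 2 * r * rb * (1 + Real.cos θ) + 2 * s * sb * (1 + Real.cos φ)

/-- `Y₋ = (r−r̄)² + (s−s̄)² + 2rr̄ + 2ss̄(1−cos φ̄)`. -/
noncomputable def Ym (r s rb sb φ : ℝ) : ℝ :=
  (r - rb) ^ 2 + (s - sb) ^ 2 + 2 * r * rb + 2 * s * sb * (1 - Real.cos φ)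

/-- `Y₊ = (r−r̄)² + (s−s̄)² + 2rr̄ + 2ss̄(1+cos φ̄)`. -/
noncomputable def Yp (r s rb sb φ : ℝ) : ℝ :=
  (r - rb) ^ 2 + (s - sb) ^ 2 + 2 * r * rb + 2 * s * sb * (1 + Real.cos φ)

/-- Folding an integral over `[0,π]` onto `[0,π/2]` by the reflection `x ↦ π − x`. -/
lemma reflect_integral (h : ℝ → ℝ) (hc : Continuous h) :
    ∫ x in (0:ℝ)..Real.pi, h x
      = ∫ x in (0:ℝ)..(Real.pi/2), (h x + h (Real.pi - x)) := by
  have hI1 : IntervalIntegrable h volume 0 (Real.pi/2) := hc.intervalIntegrable _ _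
  have hI2 : IntervalIntegrable (fun x => h (Real.pi - x)) volume 0 (Real.pi/2) :=
    (hc.comp (continuous_const.sub continuous_id)).intervalIntegrable _ _
  rw [intervalIntegral.integral_add hI1 hI2]
  have h2 : (∫ x in (0:ℝ)..(Real.pi/2), h (Real.pi - x))
      = ∫ x in (Real.pi/2)..Real.pi, h x := by
    rw [intervalIntegral.integral_comp_sub_left h Real.pi]
    rw [sub_zero, sub_half]
  rw [h2]
  exact (intervalIntegral.integral_add_adjacent_intervals (hc.intervalIntegrable _ _)
    (hc.intervalIntegrable _ _)).symm

/-- For all `r, s, r̄, s̄ ≥ 0` with `(r,s) ≠ (r̄,s̄)`, the Biot–Savart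
kernel admits the symmetrized representation
`F^r(r,s,r̄,s̄) = (16r/π²) ∫₀^{π/2} ∫₀^{π/2} r̄² s̄ cos² θ̄
  [ (s̄ − s cos φ̄) Y₋ / (X₋₋² X₊₋²) + (s̄ + s cos φ̄) Y₊ / (X₋₊² X₊₊²) ] dφ̄ dθ̄`. -/
theorem stmt_5 (r s rb sb : ℝ) (hr : 0 ≤ r) (hs : 0 ≤ s) (hrb : 0 ≤ rb) (hsb : 0 ≤ sb)
    (hne : (r, s) ≠ (rb, sb)) :
    Fr r s rb sb =
      (16 * r / Real.pi ^ 2) *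
        ∫ θ in (0:ℝ)..(Real.pi / 2), ∫ φ in (0:ℝ)..(Real.pi / 2),
          rb ^ 2 * sb * (Real.cos θ) ^ 2 *
            ((sb - s * Real.cos φ) * Ym r s rb sb φ /
                ((Xmm r s rb sb θ φ) ^ 2 * (Xpm r s rb sb θ φ) ^ 2) +
             (sb + s * Real.cos φ) * Yp r s rb sb φ /
                ((Xmp r s rb sb θ φ) ^ 2 * (Xpp r s rb sb θ φ) ^ 2)) := by
  have hP : 0 < (r - rb) ^ 2 + (s - sb) ^ 2 := by
    have h' : r ≠ rb ∨ s ≠ sb := by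
      by_contra h
      push_neg at h
      exact hne (by rw [h.1, h.2])
    rcases h' with h | h
    · have h1 : 0 < (r - rb) ^ 2 := by
        have := sub_ne_zero.mpr h
        positivity
      nlinarith [sq_nonneg (s - sb)]
    · have h1 : 0 < (s - sb) ^ 2 := by
        have := sub_ne_zero.mpr h
        positivity
      nlinarith [sq_nonneg (r - rb)]
  have key : ∀ a b : ℝ, 0 ≤ a → 0 ≤ b →
      0 < (r - rb) ^ 2 + (s - sb) ^ 2 + 2 * r * rb * a + 2 * s * sb * b := by
    intro a b ha hb
    have h1 : 0 ≤ 2 * r * rb * a := by positivity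
    have h2 : 0 ≤ 2 * s * sb * b := by positivity
    linarith
  have hXmm : ∀ θ φ : ℝ, 0 < Xmm r s rb sb θ φ := fun θ φ =>
    key _ _ (by nlinarith [Real.cos_le_one θ]) (by nlinarith [Real.cos_le_one φ])
  have hXpm : ∀ θ φ : ℝ, 0 < Xpm r s rb sb θ φ := fun θ φ =>
    key _ _ (by nlinarith [Real.neg_one_le_cos θ]) (by nlinarith [Real.cos_le_one φ])
  have hXmp : ∀ θ φ : ℝ, 0 < Xmp r s rb sb θ φ := fun θ φ =>
    key _ _ (by nlinarith [Real.cos_le_one θ]) (by nlinarith [Real.neg_one_le_cos φ])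
  have hXpp : ∀ θ φ : ℝ, 0 < Xpp r s rb sb θ φ := fun θ φ =>
    key _ _ (by nlinarith [Real.neg_one_le_cos θ]) (by nlinarith [Real.neg_one_le_cos φ])
  have cXmm : Continuous fun p : ℝ × ℝ => Xmm r s rb sb p.1 p.2 := by
    unfold Xmm; fun_prop
  have cXmp : Continuous fun p : ℝ × ℝ => Xmp r s rb sb p.1 p.2 := by
    unfold Xmp; fun_prop
  set f : ℝ → ℝ → ℝ := fun θ φ =>
    rb * sb * Real.cos θ * (sb - s * Real.cos φ) / (Xmm r s rb sb θ φ) ^ 2 with hf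
  set g : ℝ → ℝ → ℝ := fun θ φ =>
    rb * sb * Real.cos θ * (sb - s * Real.cos φ) / (Xmm r s rb sb θ φ) ^ 2
      + rb * sb * Real.cos θ * (sb + s * Real.cos φ) / (Xmp r s rb sb θ φ) ^ 2 with hg
  have cf : Continuous (Function.uncurry f) := by
    apply Continuous.div (by fun_prop) (cXmm.pow 2)
    intro p
    exact pow_ne_zero 2 (hXmm p.1 p.2).ne'
  have cg : Continuous (Function.uncurry g) := by
    apply Continuous.add
    · exact Continuous.div (by fun_prop) (cXmm.pow 2)
        (fun p => pow_ne_zero 2 (hXmm p.1 p.2).ne')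
    · exact Continuous.div (by fun_prop) (cXmp.pow 2)
        (fun p => pow_ne_zero 2 (hXmp p.1 p.2).ne')
  -- Step 1: fold the inner (φ) integral
  have step1 : ∀ θ : ℝ,
      (∫ φ in (0:ℝ)..Real.pi, f θ φ) = ∫ φ in (0:ℝ)..(Real.pi/2), g θ φ := by
    intro θ
    have hcθ : Continuous (f θ) := cf.uncurry_left θ
    rw [reflect_integral (f θ) hcθ]
    apply intervalIntegral.integral_congr
    intro φ _
    have hX : Xmm r s rb sb θ (Real.pi - φ) = Xmp r s rb sb θ φ := by
      unfold Xmm Xmp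
      rw [Real.cos_pi_sub]
      ring
    show f θ φ + f θ (Real.pi - φ) = g θ φ
    simp only [hf, hg, hX, Real.cos_pi_sub]
    ring
  -- Step 2: fold the outer (θ) integral
  have hGcont : Continuous fun θ => ∫ φ in (0:ℝ)..(Real.pi/2), g θ φ :=
    intervalIntegral.continuous_parametric_intervalIntegral_of_continuous' cg 0 (Real.pi/2)
  have step2 :
      (∫ θ in (0:ℝ)..Real.pi, ∫ φ in (0:ℝ)..(Real.pi/2), g θ φ)
        = ∫ θ in (0:ℝ)..(Real.pi/2), ∫ φ in (0:ℝ)..(Real.pi/2),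
            (g θ φ + g (Real.pi - θ) φ) := by
    rw [reflect_integral _ hGcont]
    apply intervalIntegral.integral_congr
    intro θ _
    have hI1 : IntervalIntegrable (fun φ => g θ φ) volume 0 (Real.pi/2) :=
      (cg.uncurry_left θ).intervalIntegrable _ _
    have hI2 : IntervalIntegrable (fun φ => g (Real.pi - θ) φ) volume 0 (Real.pi/2) :=
      (cg.uncurry_left (Real.pi - θ)).intervalIntegrable _ _
    exact (intervalIntegral.integral_add hI1 hI2).symm
  -- Step 3: pointwise algebraic identity
  have step3 : ∀ θ φ : ℝ, g θ φ + g (Real.pi - θ) φ =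
      8 * r * (rb ^ 2 * sb * (Real.cos θ) ^ 2 *
        ((sb - s * Real.cos φ) * Ym r s rb sb φ /
            ((Xmm r s rb sb θ φ) ^ 2 * (Xpm r s rb sb θ φ) ^ 2) +
         (sb + s * Real.cos φ) * Yp r s rb sb φ /
            ((Xmp r s rb sb θ φ) ^ 2 * (Xpp r s rb sb θ φ) ^ 2))) := by
    intro θ φ
    have h1 : Xmm r s rb sb (Real.pi - θ) φ = Xpm r s rb sb θ φ := by
      unfold Xmm Xpm; rw [Real.cos_pi_sub]; ring
    have h2 : Xmp r s rb sb (Real.pi - θ) φ = Xpp r s rb sb θ φ := by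
      unfold Xmp Xpp; rw [Real.cos_pi_sub]; ring
    have e1 := (hXmm θ φ).ne'
    have e2 := (hXpm θ φ).ne'
    have e3 := (hXmp θ φ).ne'
    have e4 := (hXpp θ φ).ne'
    have r1 : Xpm r s rb sb θ φ - Xmm r s rb sb θ φ = 4 * r * rb * Real.cos θ := by
      unfold Xmm Xpm; ring
    have r2 : Xpm r s rb sb θ φ + Xmm r s rb sb θ φ = 2 * Ym r s rb sb φ := by
      unfold Xmm Xpm Ym; ring
    have r3 : Xpp r s rb sb θ φ - Xmp r s rb sb θ φ = 4 * r * rb * Real.cos θ := by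
      unfold Xmp Xpp; ring
    have r4 : Xpp r s rb sb θ φ + Xmp r s rb sb θ φ = 2 * Yp r s rb sb φ := by
      unfold Xmp Xpp Yp; ring
    have sq1 : (Xpm r s rb sb θ φ) ^ 2 - (Xmm r s rb sb θ φ) ^ 2
        = 8 * r * rb * Real.cos θ * Ym r s rb sb φ := by
      linear_combination (Xpm r s rb sb θ φ + Xmm r s rb sb θ φ) * r1
        + (4 * r * rb * Real.cos θ) * r2
    have sq2 : (Xpp r s rb sb θ φ) ^ 2 - (Xmp r s rb sb θ φ) ^ 2
        = 8 * r * rb * Real.cos θ * Yp r s rb sb φ := by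
      linear_combination (Xpp r s rb sb θ φ + Xmp r s rb sb θ φ) * r3
        + (4 * r * rb * Real.cos θ) * r4
    simp only [hg, h1, h2, Real.cos_pi_sub]
    field_simp
    linear_combination
        ((rb * sb * Real.cos θ * (sb - s * Real.cos φ) * (Xmp r s rb sb θ φ)^2
            * (Xpp r s rb sb θ φ)^2) * sq1
         + (rb * sb * Real.cos θ * (sb + s * Real.cos φ) * (Xmm r s rb sb θ φ)^2
            * (Xpm r s rb sb θ φ)^2) * sq2)
  -- assemble
  have hFr : Fr r s rb sb
      = (2 / Real.pi ^ 2) * ∫ θ in (0:ℝ)..Real.pi, ∫ φ in (0:ℝ)..Real.pi, f θ φ := rfl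
  rw [hFr]
  have e5 : (∫ θ in (0:ℝ)..Real.pi, ∫ φ in (0:ℝ)..Real.pi, f θ φ)
      = ∫ θ in (0:ℝ)..Real.pi, ∫ φ in (0:ℝ)..(Real.pi/2), g θ φ :=
    intervalIntegral.integral_congr fun θ _ => step1 θ
  rw [e5, step2]
  have e6 : (∫ θ in (0:ℝ)..(Real.pi/2), ∫ φ in (0:ℝ)..(Real.pi/2),
        (g θ φ + g (Real.pi - θ) φ))
      = ∫ θ in (0:ℝ)..(Real.pi/2), ∫ φ in (0:ℝ)..(Real.pi/2),
          8 * r * (rb ^ 2 * sb * (Real.cos θ) ^ 2 *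
            ((sb - s * Real.cos φ) * Ym r s rb sb φ /
                ((Xmm r s rb sb θ φ) ^ 2 * (Xpm r s rb sb θ φ) ^ 2) +
             (sb + s * Real.cos φ) * Yp r s rb sb φ /
                ((Xmp r s rb sb θ φ) ^ 2 * (Xpp r s rb sb θ φ) ^ 2))) :=
    intervalIntegral.integral_congr fun θ _ =>
      intervalIntegral.integral_congr fun φ _ => step3 θ φ
  have e7 : (∫ θ in (0:ℝ)..(Real.pi/2), ∫ φ in (0:ℝ)..(Real.pi/2),
          8 * r * (rb ^ 2 * sb * (Real.cos θ) ^ 2 *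
            ((sb - s * Real.cos φ) * Ym r s rb sb φ /
                ((Xmm r s rb sb θ φ) ^ 2 * (Xpm r s rb sb θ φ) ^ 2) +
             (sb + s * Real.cos φ) * Yp r s rb sb φ /
                ((Xmp r s rb sb θ φ) ^ 2 * (Xpp r s rb sb θ φ) ^ 2))))
      = 8 * r * ∫ θ in (0:ℝ)..(Real.pi/2), ∫ φ in (0:ℝ)..(Real.pi/2),
          rb ^ 2 * sb * (Real.cos θ) ^ 2 *
            ((sb - s * Real.cos φ) * Ym r s rb sb φ /
                ((Xmm r s rb sb θ φ) ^ 2 * (Xpm r s rb sb θ φ) ^ 2) +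
             (sb + s * Real.cos φ) * Yp r s rb sb φ /
                ((Xmp r s rb sb θ φ) ^ 2 * (Xpp r s rb sb θ φ) ^ 2)) := by
    rw [← intervalIntegral.integral_const_mul]
    exact intervalIntegral.integral_congr fun θ _ =>
      intervalIntegral.integral_const_mul _ _
  rw [e6, e7]
  ring
end

section
/- Let M ≥ 0, let Φ : ℝ⁴ → ℝ⁴ be a map, and let w₀, w : Π → ℝ be functions such that for every y ∈ ℝ⁴: |r_{Φ(y)} − r_y| ≤ M, |s_{Φ(y)} − s_y| ≤ M, and r_y s_y · w(r_{Φ(y)}, s_{Φ(y)}) = r_{Φ(y)} s_{Φ(y)} · w₀(r_y, s_y). Suppose N₀ := sup_{(r,s)∈Π} |w₀(r,s)|, N₁ := sup_{r>0} |w₀(r,s)|/r, N₂ := sup_{s>0} |w₀(r,s)|/s and N₃ := sup_{r,s>0} |w₀(r,s)|/(r s) are all finite. Then for every y ∈ ℝ⁴ with r_y > 0 and s_y > 0, |w(r_{Φ(y)}, s_{Φ(y)})| ≤ N₀ + (N₁ + N₂)(1 + M) + N₃ (1 + M)². In particular, if Φ maps {y ∈ ℝ⁴ : r_y s_y > 0}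 onto {x ∈ ℝ⁴ : r_x s_x > 0}, then sup_{(r,s)∈Π, rs>0} |w(r,s)| ≤ N₀ + (N₁ + N₂)(1 + M) + N₃ (1 + M)². -/
open MeasureTheory Real

/-- `r_x = √(x₁² + x₂²)` for `x ∈ ℝ⁴`. -/
noncomputable def rx (x : Fin 4 → ℝ) : ℝ := Real.sqrt ((x 0) ^ 2 + (x 1) ^ 2)

/-- `s_x = √(x₃² + x₄²)` for `x ∈ ℝ⁴`. -/
noncomputable def sx (x : Fin 4 → ℝ) : ℝ := Real.sqrt ((x 2) ^ 2 + (x 3) ^ 2)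

lemma rx_nonneg (x : Fin 4 → ℝ) : 0 ≤ rx x := Real.sqrt_nonneg _
lemma sx_nonneg (x : Fin 4 → ℝ) : 0 ≤ sx x := Real.sqrt_nonneg _

/-- Abstract form of the vorticity `L^∞` growth estimate: `Φ` plays the
role of the flow map, `M` bounds the radial displacements, and the product relation
expresses conservation of the relative vorticity `w/(rs)` along the flow. -/
theorem stmt_11 (M : ℝ) (hM : 0 ≤ M) (Φ : (Fin 4 → ℝ) → (Fin 4 → ℝ))
    (w₀ w : ℝ × ℝ → ℝ)
    (hdr : ∀ y, |rx (Φ y) - rx y| ≤ M) (hds : ∀ y, |sx (Φ y) - sx y| ≤ M)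
    (hcons : ∀ y, rx y * sx y * w (rx (Φ y), sx (Φ y))
      = rx (Φ y) * sx (Φ y) * w₀ (rx y, sx y))
    (N₀ N₁ N₂ N₃ : ℝ)
    (h0 : ∀ r s : ℝ, 0 ≤ r → 0 ≤ s → |w₀ (r, s)| ≤ N₀)
    (h1 : ∀ r s : ℝ, 0 < r → 0 ≤ s → |w₀ (r, s)| ≤ N₁ * r)
    (h2 : ∀ r s : ℝ, 0 ≤ r → 0 < s → |w₀ (r, s)| ≤ N₂ * s)
    (h3 : ∀ r s : ℝ, 0 < r → 0 < s → |w₀ (r, s)| ≤ N₃ * (r * s)) :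
    (∀ y : Fin 4 → ℝ, 0 < rx y → 0 < sx y →
        |w (rx (Φ y), sx (Φ y))| ≤ N₀ + (N₁ + N₂) * (1 + M) + N₃ * (1 + M) ^ 2) ∧
    ((∀ x : Fin 4 → ℝ, 0 < rx x * sx x → ∃ y : Fin 4 → ℝ, 0 < rx y * sx y ∧ Φ y = x) →
      ∀ r s : ℝ, 0 < r → 0 < s →
        |w (r, s)| ≤ N₀ + (N₁ + N₂) * (1 + M) + N₃ * (1 + M) ^ 2) := by
  have hN0 : 0 ≤ N₀ := le_trans (abs_nonneg _) (h0 0 0 le_rfl le_rfl)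
  have hN1 : 0 ≤ N₁ := by
    have := h1 1 0 one_pos le_rfl
    nlinarith [abs_nonneg (w₀ (1, 0))]
  have hN2 : 0 ≤ N₂ := by
    have := h2 0 1 le_rfl one_pos
    nlinarith [abs_nonneg (w₀ (0, 1))]
  have hN3 : 0 ≤ N₃ := by
    have := h3 1 1 one_pos one_pos
    nlinarith [abs_nonneg (w₀ (1, 1))]
  have main : ∀ y : Fin 4 → ℝ, 0 < rx y → 0 < sx y →
      |w (rx (Φ y), sx (Φ y))| ≤ N₀ + (N₁ + N₂) * (1 + M) + N₃ * (1 + M) ^ 2 := by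
    intro y hr hs
    set r := rx y
    set s := sx y
    set a := rx (Φ y) with ha
    set b := sx (Φ y) with hb
    have ha0 : 0 ≤ a := rx_nonneg _
    have hb0 : 0 ≤ b := sx_nonneg _
    have haM : a ≤ r + M := by have := abs_le.mp (hdr y); linarith [this.2]
    have hbM : b ≤ s + M := by have := abs_le.mp (hds y); linarith [this.2]
    have hrs : 0 < r * s := mul_pos hr hs
    have hw : w (a, b) = a * b * w₀ (r, s) / (r * s) := by
      field_simp
      linarith [hcons y]
    have habs : |w (a, b)| = a * b * |w₀ (r, s)| / (r * s) := by
      rw [hw, abs_div, abs_mul, abs_of_nonneg (mul_nonneg ha0 hb0),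
        abs_of_pos hrs]
    have key : a * b * |w₀ (r, s)| ≤
        (N₀ + (N₁ + N₂) * (1 + M) + N₃ * (1 + M) ^ 2) * (r * s) := by
      have e0 := h0 r s hr.le hs.le
      have e1 := h1 r s hr hs.le
      have e2 := h2 r s hr.le hs
      have e3 := h3 r s hr hs
      have hab : a * b * |w₀ (r, s)| ≤ (r + M) * (s + M) * |w₀ (r, s)| := by
        have : a * b ≤ (r + M) * (s + M) :=
          mul_le_mul haM hbM hb0 (by linarith)
        exact mul_le_mul_of_nonneg_right this (abs_nonneg _)
      have expand : (r + M) * (s + M) * |w₀ (r, s)|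
          = r * s * |w₀ (r, s)| + M * s * |w₀ (r, s)|
            + M * r * |w₀ (r, s)| + M * M * |w₀ (r, s)| := by ring
      nlinarith [mul_le_mul_of_nonneg_left e0 hrs.le,
        mul_le_mul_of_nonneg_left e1 (mul_nonneg hM hs.le),
        mul_le_mul_of_nonneg_left e2 (mul_nonneg hM hr.le),
        mul_le_mul_of_nonneg_left e3 (mul_nonneg hM hM),
        mul_pos hr hs, mul_nonneg (mul_nonneg hN1 hM) (mul_pos hr hs).le,
        mul_nonneg (mul_nonneg hN2 hM) (mul_pos hr hs).le,
        mul_nonneg (mul_nonneg hN3 (by nlinarith : (0:ℝ) ≤ 2 * M + M ^ 2 - M * M)) hrs.le,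
        mul_nonneg hN3 hrs.le, mul_nonneg (mul_nonneg hN3 hM) hrs.le]
    rw [habs, div_le_iff₀ hrs]
    exact key
  refine ⟨main, ?_⟩
  intro hsurj r s hr hs
  set x : Fin 4 → ℝ := ![r, 0, s, 0] with hx
  have hrx : rx x = r := by
    simp [rx, hx]
    rw [Real.sqrt_sq hr.le]
  have hsx : sx x = s := by
    simp [sx, hx]
    rw [Real.sqrt_sq hs.le]
  obtain ⟨y, hy, hΦ⟩ := hsurj x (by rw [hrx, hsx]; exact mul_pos hr hs)
  have hry : 0 < rx y := by
    rcases (rx_nonneg y).lt_or_eq with h | h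
    · exact h
    · exfalso; rw [← h] at hy; simp at hy
  have hsy : 0 < sx y := by
    rcases (sx_nonneg y).lt_or_eq with h | h
    · exact h
    · exfalso; rw [← h] at hy; simp at hy
  have := main y hry hsy
  rwa [hΦ, hrx, hsx] at this
end

section
/- Let M ≥ 0, let Φ : ℝ⁴ → ℝ⁴ be a measurable bijection preserving Lebesgue measure on ℝ⁴, and let w₀, w : Π → ℝ be measurable functions such that for almost every y ∈ ℝ⁴: |r_{Φ(y)} − r_y| ≤ M, |s_{Φ(y)} − s_y| ≤ M, and r_y s_y · w(r_{Φ(y)}, s_{Φ(y)}) = r_{Φ(y)} s_{Φ(y)} · w₀(r_y, s_y). Then ∫_{ℝ⁴} (r_x/s_x) |w(r_x, s_x)| dx ≤ (1 + M)² · ( ∫_{ℝ⁴} (r_y/s_y) |w₀(r_y, s_y)| dy + ∫_{ℝ⁴} |w₀(r_y, s_y)| / (r_y s_y) dy ), and likewise ∫_{ℝ⁴} (s_x/r_x) |w(r_x, s_x)| dx ≤ (1 + M)² · ( ∫_{ℝ⁴} (s_y/r_y) |w₀(r_y, s_y)| dy + ∫_{ℝ⁴} |w₀(r_y, s_y)|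 / (r_y s_y) dy ). -/
open MeasureTheory Real ENNReal

lemma key_ineq (M r s r' s' W W₀ : ℝ) (hM : 0 ≤ M) (hr : 0 < r) (hs : 0 < s)
    (hr' : 0 ≤ r') (hs' : 0 ≤ s') (hd : |r' - r| ≤ M)
    (hc : r * s * W = r' * s' * W₀) :
    ENNReal.ofReal (r' / s' * |W|) ≤ ENNReal.ofReal ((1 + M) ^ 2) *
      (ENNReal.ofReal (r / s * |W₀|) + ENNReal.ofReal (|W₀| / (r * s))) := by
  by_cases hs'0 : s' = 0
  · simp [hs'0]
  · have hs'pos : 0 < s' := lt_of_le_of_ne hs' (Ne.symm hs'0)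
    have hrs : (0 : ℝ) < r * s := mul_pos hr hs
    have hWeq : W = r' * s' * W₀ / (r * s) := by
      field_simp
      linarith [hc]
    have hWabs : |W| = r' * s' * |W₀| / (r * s) := by
      rw [hWeq, abs_div, abs_mul, abs_mul, abs_of_nonneg hr', abs_of_pos hs'pos,
        abs_of_pos hrs]
    have hLHS : r' / s' * |W| = r' ^ 2 * |W₀| / (r * s) := by
      rw [hWabs]; field_simp
    rw [hLHS, ← ENNReal.ofReal_add (by positivity) (by positivity),
      ← ENNReal.ofReal_mul (by positivity)]
    apply ENNReal.ofReal_le_ofReal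
    have hr'le : r' ≤ r + M := by
      rcases abs_le.1 hd with ⟨h1, h2⟩; linarith
    have h1 : r' ^ 2 ≤ (1 + M) ^ 2 * (r ^ 2 + 1) := by
      nlinarith [sq_nonneg (r - 1/2), sq_nonneg (M * r), hr.le, mul_nonneg hM hM]
    have h2 : (1 + M) ^ 2 * (r / s * |W₀| + |W₀| / (r * s))
        = (1 + M) ^ 2 * (r ^ 2 + 1) * |W₀| / (r * s) := by
      field_simp
    rw [h2]
    gcongr

lemma side_estimate (M : ℝ) (hM : 0 ≤ M) (Φ : (Fin 4 → ℝ) → (Fin 4 → ℝ))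
    (hΦ : MeasurePreserving Φ volume volume)
    (R S Wf W0f : (Fin 4 → ℝ) → ℝ) (hR : Measurable R) (hS : Measurable S)
    (hWf : Measurable Wf) (hW0f : Measurable W0f)
    (hRnn : ∀ x, 0 ≤ R x) (hSnn : ∀ x, 0 ≤ S x)
    (hRS : ∀ᵐ y : Fin 4 → ℝ, 0 < R y ∧ 0 < S y)
    (hd : ∀ᵐ y : Fin 4 → ℝ, |R (Φ y) - R y| ≤ M)
    (hcons : ∀ᵐ y : Fin 4 → ℝ, R y * S y * Wf (Φ y) = R (Φ y) * S (Φ y) * W0f y) :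
    (∫⁻ x : Fin 4 → ℝ, ENNReal.ofReal (R x / S x * |Wf x|)) ≤
      ENNReal.ofReal ((1 + M) ^ 2) *
        ((∫⁻ y : Fin 4 → ℝ, ENNReal.ofReal (R y / S y * |W0f y|)) +
         (∫⁻ y : Fin 4 → ℝ, ENNReal.ofReal (|W0f y| / (R y * S y)))) := by
  have hF : Measurable fun x => ENNReal.ofReal (R x / S x * |Wf x|) :=
    ENNReal.measurable_ofReal.comp ((hR.div hS).mul hWf.abs)
  have hG : Measurable fun y => ENNReal.ofReal (R y / S y * |W0f y|) :=
    ENNReal.measurable_ofReal.comp ((hR.div hS).mul hW0f.abs)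
  have hH : Measurable fun y => ENNReal.ofReal (|W0f y| / (R y * S y)) :=
    ENNReal.measurable_ofReal.comp (hW0f.abs.div (hR.mul hS))
  calc (∫⁻ x : Fin 4 → ℝ, ENNReal.ofReal (R x / S x * |Wf x|))
      = ∫⁻ y : Fin 4 → ℝ, ENNReal.ofReal (R (Φ y) / S (Φ y) * |Wf (Φ y)|) :=
        (hΦ.lintegral_comp hF).symm
    _ ≤ ∫⁻ y : Fin 4 → ℝ, ENNReal.ofReal ((1 + M) ^ 2) *
          (ENNReal.ofReal (R y / S y * |W0f y|) + ENNReal.ofReal (|W0f y| / (R y * S y))) := by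
        apply lintegral_mono_ae
        filter_upwards [hRS, hd, hcons] with y hy hdy hcy
        exact key_ineq M (R y) (S y) (R (Φ y)) (S (Φ y)) (Wf (Φ y)) (W0f y)
          hM hy.1 hy.2 (hRnn _) (hSnn _) hdy hcy
    _ = ENNReal.ofReal ((1 + M) ^ 2) *
          ((∫⁻ y : Fin 4 → ℝ, ENNReal.ofReal (R y / S y * |W0f y|)) +
           (∫⁻ y : Fin 4 → ℝ, ENNReal.ofReal (|W0f y| / (R y * S y)))) := by
        rw [lintegral_const_mul (f := fun y => ENNReal.ofReal (R y / S y * |W0f y|) + ENNReal.ofReal (|W0f y| / (R y * S y))) _ (hG.add hH), lintegral_add_left hG]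


/-- Abstract form of the weighted `L¹` vorticity growth estimate for
bi-rotational Euler flows: `Φ` is the measure-preserving flow map, `M` bounds the radial
displacements and the product relation expresses conservation of `w/(rs)` along the flow.
Then `∫ (r_x/s_x)|w(r_x,s_x)| dx ≤ (1+M)²(∫ (r_y/s_y)|w₀| dy + ∫ |w₀|/(r_y s_y) dy)`,
and likewise with the roles of `r` and `s` exchanged. -/
theorem stmt_12 (M : ℝ) (hM : 0 ≤ M) (Φ : (Fin 4 → ℝ) → (Fin 4 → ℝ))
    (hΦmeas : Measurable Φ) (hΦ : MeasurePreserving Φ volume volume)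
    (hΦbij : Function.Bijective Φ)
    (w₀ w : ℝ × ℝ → ℝ) (hw₀ : Measurable w₀) (hw : Measurable w)
    (hdr : ∀ᵐ y : Fin 4 → ℝ, |rx (Φ y) - rx y| ≤ M)
    (hds : ∀ᵐ y : Fin 4 → ℝ, |sx (Φ y) - sx y| ≤ M)
    (hcons : ∀ᵐ y : Fin 4 → ℝ, rx y * sx y * w (rx (Φ y), sx (Φ y))
      = rx (Φ y) * sx (Φ y) * w₀ (rx y, sx y)) :
    (∫⁻ x : Fin 4 → ℝ, ENNReal.ofReal (rx x / sx x * |w (rx x, sx x)|)) ≤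
      ENNReal.ofReal ((1 + M) ^ 2) *
        ((∫⁻ y : Fin 4 → ℝ, ENNReal.ofReal (rx y / sx y * |w₀ (rx y, sx y)|)) +
         (∫⁻ y : Fin 4 → ℝ, ENNReal.ofReal (|w₀ (rx y, sx y)| / (rx y * sx y)))) ∧
    (∫⁻ x : Fin 4 → ℝ, ENNReal.ofReal (sx x / rx x * |w (rx x, sx x)|)) ≤
      ENNReal.ofReal ((1 + M) ^ 2) *
        ((∫⁻ y : Fin 4 → ℝ, ENNReal.ofReal (sx y / rx y * |w₀ (rx y, sx y)|)) +
         (∫⁻ y : Fin 4 → ℝ, ENNReal.ofReal (|w₀ (rx y, sx y)| / (rx y * sx y)))) := by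
  have hrx : Measurable rx :=
    (((measurable_pi_apply 0).pow_const 2).add ((measurable_pi_apply 1).pow_const 2)).sqrt
  have hsx : Measurable sx :=
    (((measurable_pi_apply 2).pow_const 2).add ((measurable_pi_apply 3).pow_const 2)).sqrt
  have hrxnn : ∀ x, 0 ≤ rx x := fun x => Real.sqrt_nonneg _
  have hsxnn : ∀ x, 0 ≤ sx x := fun x => Real.sqrt_nonneg _
  have hWf : Measurable fun x => w (rx x, sx x) := hw.comp (hrx.prodMk hsx)
  have hW0f : Measurable fun x => w₀ (rx x, sx x) := hw₀.comp (hrx.prodMk hsx)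
  have hpos : ∀ᵐ y : Fin 4 → ℝ, 0 < rx y ∧ 0 < sx y := by
    have h0 : ∀ᵐ y : Fin 4 → ℝ, y 0 ≠ 0 := by
      rw [volume_pi]; exact Measure.ae_eval_ne _ 0 0
    have h2 : ∀ᵐ y : Fin 4 → ℝ, y 2 ≠ 0 := by
      rw [volume_pi]; exact Measure.ae_eval_ne _ 2 0
    filter_upwards [h0, h2] with y hy0 hy2
    constructor
    · exact Real.sqrt_pos.2 (add_pos_of_pos_of_nonneg
        (lt_of_le_of_ne (sq_nonneg _) (Ne.symm (pow_ne_zero 2 hy0))) (sq_nonneg _))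
    · exact Real.sqrt_pos.2 (add_pos_of_pos_of_nonneg
        (lt_of_le_of_ne (sq_nonneg _) (Ne.symm (pow_ne_zero 2 hy2))) (sq_nonneg _))
  constructor
  · exact side_estimate M hM Φ hΦ rx sx _ _ hrx hsx hWf hW0f hrxnn hsxnn hpos hdr hcons
  · have hpos' : ∀ᵐ y : Fin 4 → ℝ, 0 < sx y ∧ 0 < rx y := by
      filter_upwards [hpos] with y hy; exact ⟨hy.2, hy.1⟩
    have hcons' : ∀ᵐ y : Fin 4 → ℝ, sx y * rx y * w (rx (Φ y), sx (Φ y))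
        = sx (Φ y) * rx (Φ y) * w₀ (rx y, sx y) := by
      filter_upwards [hcons] with y hy; linear_combination hy
    have := side_estimate M hM Φ hΦ sx rx _ _ hsx hrx hWf hW0f hsxnn hrxnn hpos' hds hcons'
    convert this using 5 <;> rw [mul_comm (rx _) (sx _)]
end

section
/- Let u : ℝ⁴ → ℝ⁴ be three times continuously differentiable with all partial derivatives up to order 3 bounded on ℝ⁴. Assume u is bi-rotationally symmetric, i.e. u(Rx) = R u(x) for every rotation R of ℝ⁴ that acts as a rotation in the (x₁,x₂)-plane fixing x₃,x₄, and for every rotation R that acts as a rotation in the (x₃,x₄)-plane fixing x₁,x₂; and assume u is swirl-free: x₂ u¹(x) = x₁ u²(x) and x₄ u³(x) = x₃ u⁴(x) for all x ∈ ℝ⁴. Let ω^{1,3} := ∂_{x₃} u¹ − ∂_{x₁} u³. Then sup over {x ∈ ℝ⁴ : x₁ x₃ ≠ 0} of (1 + r_x + s_x) |ω^{1,3}(x)| / |x₁ x₃| is finite. -/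
open MeasureTheory Real

/-- Rotation by angle `α` in the `(x₁,x₂)`-plane, fixing `x₃, x₄`. -/
noncomputable def rot12 (α : ℝ) (x : Fin 4 → ℝ) : Fin 4 → ℝ :=
  ![x 0 * Real.cos α - x 1 * Real.sin α, x 0 * Real.sin α + x 1 * Real.cos α, x 2, x 3]

/-- Rotation by angle `α` in the `(x₃,x₄)`-plane, fixing `x₁, x₂`. -/
noncomputable def rot34 (α : ℝ) (x : Fin 4 → ℝ) : Fin 4 → ℝ :=
  ![x 0, x 1, x 2 * Real.cos α - x 3 * Real.sin α, x 2 * Real.sin α + x 3 * Real.cos α]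

/-- The partial derivative `∂_{x_j} f` of a scalar function on `ℝ⁴`. -/
noncomputable def pd (j : Fin 4) (f : (Fin 4 → ℝ) → ℝ) (x : Fin 4 → ℝ) : ℝ :=
  fderiv ℝ f x (Pi.single j 1)

namespace Stmt13Aux

noncomputable def ee (j : Fin 4) : Fin 4 → ℝ := Pi.single j 1

@[simp] lemma ee_apply (j i : Fin 4) : ee j i = if i = j then 1 else 0 := by
  simp [ee, Pi.single_apply]

lemma norm_ee (j : Fin 4) : ‖ee j‖ = 1 := by
  rw [ee, Pi.norm_single]; norm_num

lemma pd_eq_ee (j : Fin 4) (f : (Fin 4 → ℝ) → ℝ) (x : Fin 4 → ℝ) :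
    pd j f x = fderiv ℝ f x (ee j) := rfl

@[simp] lemma rot12_0 (α : ℝ) (x : Fin 4 → ℝ) : rot12 α x 0 = x 0 * Real.cos α - x 1 * Real.sin α := rfl
@[simp] lemma rot12_1 (α : ℝ) (x : Fin 4 → ℝ) : rot12 α x 1 = x 0 * Real.sin α + x 1 * Real.cos α := rfl
@[simp] lemma rot12_2 (α : ℝ) (x : Fin 4 → ℝ) : rot12 α x 2 = x 2 := rfl
@[simp] lemma rot12_3 (α : ℝ) (x : Fin 4 → ℝ) : rot12 α x 3 = x 3 := rfl
@[simp] lemma rot34_0 (α : ℝ) (x : Fin 4 → ℝ) : rot34 α x 0 = x 0 := rfl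
@[simp] lemma rot34_1 (α : ℝ) (x : Fin 4 → ℝ) : rot34 α x 1 = x 1 := rfl
@[simp] lemma rot34_2 (α : ℝ) (x : Fin 4 → ℝ) : rot34 α x 2 = x 2 * Real.cos α - x 3 * Real.sin α := rfl
@[simp] lemma rot34_3 (α : ℝ) (x : Fin 4 → ℝ) : rot34 α x 3 = x 2 * Real.sin α + x 3 * Real.cos α := rfl

lemma rot12_zero (x : Fin 4 → ℝ) : rot12 0 x = x := by
  funext i; fin_cases i <;> simp

lemma rot34_zero (x : Fin 4 → ℝ) : rot34 0 x = x := by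
  funext i; fin_cases i <;> simp

noncomputable def R12 (α : ℝ) : (Fin 4 → ℝ) →L[ℝ] (Fin 4 → ℝ) :=
  LinearMap.toContinuousLinearMap
    { toFun := rot12 α
      map_add' := by intro x y; funext i; fin_cases i <;> simp [rot12] <;> ring
      map_smul' := by intro c x; funext i; fin_cases i <;> simp [rot12] <;> ring }

noncomputable def R34 (α : ℝ) : (Fin 4 → ℝ) →L[ℝ] (Fin 4 → ℝ) :=
  LinearMap.toContinuousLinearMap
    { toFun := rot34 α
      map_add' := by intro x y; funext i; fin_cases i <;> simp [rot34] <;> ring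
      map_smul' := by intro c x; funext i; fin_cases i <;> simp [rot34] <;> ring }

@[simp] lemma R12_apply (α : ℝ) (x : Fin 4 → ℝ) : R12 α x = rot12 α x := rfl
@[simp] lemma R34_apply (α : ℝ) (x : Fin 4 → ℝ) : R34 α x = rot34 α x := rfl

lemma fderiv_symm (f g : (Fin 4 → ℝ) → ℝ) (hf : Differentiable ℝ f)
    (L : (Fin 4 → ℝ) →L[ℝ] (Fin 4 → ℝ))
    (hfg : ∀ y, f (L y) = g y) (x v : Fin 4 → ℝ) :
    fderiv ℝ f (L x) (L v) = fderiv ℝ g x v := by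
  have hg : g = f ∘ L := by funext y; simp [hfg y]
  rw [hg, fderiv_comp x (hf (L x)) L.differentiableAt]
  simp [L.fderiv]

lemma hasDerivAt_line (f : (Fin 4 → ℝ) → ℝ) (hf : Differentiable ℝ f) (x v : Fin 4 → ℝ) (t : ℝ) :
    HasDerivAt (fun t : ℝ => f (x + t • v)) (fderiv ℝ f (x + t • v) v) t := by
  have hγ : HasDerivAt (fun t : ℝ => x + t • v) v t := by
    simpa using ((hasDerivAt_id t).smul_const v).const_add x
  exact (hf (x + t • v)).hasFDerivAt.comp_hasDerivAt t hγ

lemma fderiv_line_const (f : (Fin 4 → ℝ) → ℝ) (hf : Differentiable ℝ f) (x v : Fin 4 → ℝ)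
    (c : ℝ) (h : ∀ t : ℝ, f (x + t • v) = c) : fderiv ℝ f x v = 0 := by
  have h1 := hasDerivAt_line f hf x v 0
  rw [show x + (0:ℝ) • v = x by simp] at h1
  have h2 : HasDerivAt (fun t : ℝ => f (x + t • v)) 0 0 := by
    have : (fun t : ℝ => f (x + t • v)) = fun _ => c := funext h
    rw [this]; exact hasDerivAt_const 0 c
  exact h1.unique h2

lemma fderiv_line_even (f : (Fin 4 → ℝ) → ℝ) (hf : Differentiable ℝ f) (x v : Fin 4 → ℝ)
    (h : ∀ t : ℝ, f (x + t • v) = f (x - t • v)) : fderiv ℝ f x v = 0 := by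
  have h1 := hasDerivAt_line f hf x v 0
  rw [show x + (0:ℝ) • v = x by simp] at h1
  have h2 : HasDerivAt (fun t : ℝ => f (x + t • v)) (-(fderiv ℝ f x v)) 0 := by
    have key : (fun t : ℝ => f (x + t • v)) = (fun t : ℝ => f (x + t • v)) ∘ (fun t : ℝ => -t) := by
      funext t
      simp [Function.comp_apply, h t, sub_eq_add_neg]
    rw [key]
    have h3 := hasDerivAt_line f hf x v (-0)
    rw [show x + (-0:ℝ) • v = x by simp] at h3
    simpa using h3.comp 0 (hasDerivAt_neg 0)
  have := h1.unique h2
  linarith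

lemma mvt (f : (Fin 4 → ℝ) → ℝ) (hf : Differentiable ℝ f) {K : ℝ}
    (hK : ∀ z, ‖fderiv ℝ f z‖ ≤ K) (x y : Fin 4 → ℝ) : |f y - f x| ≤ K * ‖y - x‖ := by
  have := (convex_univ (𝕜 := ℝ) (E := Fin 4 → ℝ)).norm_image_sub_le_of_norm_fderiv_le
    (fun z _ => (hf z)) (fun z _ => hK z) (Set.mem_univ x) (Set.mem_univ y)
  simpa [Real.norm_eq_abs] using this

lemma hasDerivAt_rot12_curve (x : Fin 4 → ℝ) :
    HasDerivAt (fun α : ℝ => rot12 α x) ![-(x 1), x 0, 0, 0] 0 := by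
  rw [hasDerivAt_pi]
  intro i
  fin_cases i
  · simpa using (((Real.hasDerivAt_cos 0).const_mul (x 0)).fun_sub ((Real.hasDerivAt_sin 0).const_mul (x 1)) : HasDerivAt (fun y => x 0 * Real.cos y - x 1 * Real.sin y) _ 0)
  · simpa using (((Real.hasDerivAt_sin 0).const_mul (x 0)).fun_add ((Real.hasDerivAt_cos 0).const_mul (x 1)) : HasDerivAt (fun y => x 0 * Real.sin y + x 1 * Real.cos y) _ 0)
  · simpa using hasDerivAt_const (0:ℝ) (x 2)
  · simpa using hasDerivAt_const (0:ℝ) (x 3)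

lemma hasDerivAt_rot34_curve (x : Fin 4 → ℝ) :
    HasDerivAt (fun α : ℝ => rot34 α x) ![0, 0, -(x 3), x 2] 0 := by
  rw [hasDerivAt_pi]
  intro i
  fin_cases i
  · simpa using hasDerivAt_const (0:ℝ) (x 0)
  · simpa using hasDerivAt_const (0:ℝ) (x 1)
  · simpa using (((Real.hasDerivAt_cos 0).const_mul (x 2)).fun_sub ((Real.hasDerivAt_sin 0).const_mul (x 3)) : HasDerivAt (fun y => x 2 * Real.cos y - x 3 * Real.sin y) _ 0)
  · simpa using (((Real.hasDerivAt_sin 0).const_mul (x 2)).fun_add ((Real.hasDerivAt_cos 0).const_mul (x 3)) : HasDerivAt (fun y => x 2 * Real.sin y + x 3 * Real.cos y) _ 0)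

noncomputable instance instNACG2 : NormedAddCommGroup ((Fin 4 → ℝ) →L[ℝ] (Fin 4 → ℝ) →L[ℝ] Fin 4 → ℝ) := inferInstance
noncomputable instance instNS2 : NormedSpace ℝ ((Fin 4 → ℝ) →L[ℝ] (Fin 4 → ℝ) →L[ℝ] Fin 4 → ℝ) := inferInstance

end Stmt13Aux


set_option maxHeartbeats 2000000 in
/-- Let `u : ℝ⁴ → ℝ⁴` be `C³` with all partial derivatives up to order 3
bounded, bi-rotationally symmetric and swirl-free.  Let
`ω^{1,3} = ∂_{x₃} u¹ − ∂_{x₁} u³`.  Then the supremum over `{x : x₁ x₃ ≠ 0}` of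
`(1 + r_x + s_x)|ω^{1,3}(x)|/|x₁ x₃|` is finite. -/
theorem stmt_13 (u : (Fin 4 → ℝ) → (Fin 4 → ℝ))
    (hreg : ContDiff ℝ 3 u)
    (hbdd : ∀ i : ℕ, i ≤ 3 → ∃ C : ℝ, ∀ x, ‖iteratedFDeriv ℝ i u x‖ ≤ C)
    (hsym12 : ∀ α : ℝ, ∀ x, u (rot12 α x) = rot12 α (u x))
    (hsym34 : ∀ α : ℝ, ∀ x, u (rot34 α x) = rot34 α (u x))
    (hswirl12 : ∀ x, x 1 * u x 0 = x 0 * u x 1)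
    (hswirl34 : ∀ x, x 3 * u x 2 = x 2 * u x 3) :
    ∃ C : ℝ, ∀ x : Fin 4 → ℝ, x 0 * x 2 ≠ 0 →
      (1 + rx x + sx x) *
        |pd 2 (fun y => u y 0) x - pd 0 (fun y => u y 2) x| / |x 0 * x 2| ≤ C := by
  classical
  open Stmt13Aux in
  -- differentiability bookkeeping
  have hdu : Differentiable ℝ u := hreg.differentiable (by norm_num)
  have hdcomp : ∀ i : Fin 4, Differentiable ℝ (fun y => u y i) := fun i =>
    (ContinuousLinearMap.proj (R := ℝ) (φ := fun _ : Fin 4 => ℝ) i).differentiable.comp hdu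
  set F : (Fin 4 → ℝ) → ℝ :=
    fun x => pd 2 (fun y => u y 0) x - pd 0 (fun y => u y 2) x with hFset
  have hFdef : ∀ x, F x = fderiv ℝ (fun y => u y 0) x (ee 2) - fderiv ℝ (fun y => u y 2) x (ee 0) :=
    fun x => rfl
  set Φ : ((Fin 4 → ℝ) →L[ℝ] (Fin 4 → ℝ)) →L[ℝ] ℝ :=
    (ContinuousLinearMap.proj 0).comp ((ContinuousLinearMap.apply ℝ (Fin 4 → ℝ)) (ee 2)) -
    (ContinuousLinearMap.proj 2).comp ((ContinuousLinearMap.apply ℝ (Fin 4 → ℝ)) (ee 0)) with hΦset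
  have hΦ : ∀ T : (Fin 4 → ℝ) →L[ℝ] (Fin 4 → ℝ), Φ T = T (ee 2) 0 - T (ee 0) 2 := fun T => rfl
  have hpd : ∀ (i : Fin 4) (x w : Fin 4 → ℝ),
      fderiv ℝ (fun y => u y i) x w = fderiv ℝ u x w i := by
    intro i x w
    have h := (((ContinuousLinearMap.proj (R := ℝ) (φ := fun _ : Fin 4 => ℝ) i)).hasFDerivAt.comp
      x (hdu x).hasFDerivAt).fderiv
    have : fderiv ℝ (fun y => u y i) x
        = ((ContinuousLinearMap.proj (R := ℝ) (φ := fun _ : Fin 4 => ℝ) i)).comp (fderiv ℝ u x) := h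
    rw [this]; rfl
  have hF : F = ⇑Φ ∘ fderiv ℝ u := by
    funext x
    rw [Function.comp_apply, hΦ, hFdef x, hpd 0 x (ee 2), hpd 2 x (ee 0)]
  have hD1 : ContDiff ℝ 2 (fderiv ℝ u) := hreg.fderiv_right (m := 2) (by norm_num)
  have hD2 : ContDiff ℝ 1 (fderiv ℝ (fderiv ℝ u)) := hD1.fderiv_right (m := 1) (by norm_num)
  have hD1d : Differentiable ℝ (fderiv ℝ u) := hD1.differentiable (by norm_num)
  have hD2d : Differentiable ℝ (fderiv ℝ (fderiv ℝ u)) := hD2.differentiable (by norm_num)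
  have hdF : Differentiable ℝ F := by rw [hF]; exact Φ.differentiable.comp hD1d
  have hfderivF : ∀ x, fderiv ℝ F x = Φ.comp (fderiv ℝ (fderiv ℝ u) x) := by
    intro x; rw [hF]; exact (Φ.hasFDerivAt.comp x (hD1d x).hasFDerivAt).fderiv
  set H : (Fin 4 → ℝ) → ℝ := fun x => fderiv ℝ F x (ee 0) with hHdef
  set Ψ : ((Fin 4 → ℝ) →L[ℝ] ((Fin 4 → ℝ) →L[ℝ] (Fin 4 → ℝ))) →L[ℝ] ℝ :=
    Φ.comp ((ContinuousLinearMap.apply ℝ ((Fin 4 → ℝ) →L[ℝ] (Fin 4 → ℝ))) (ee 0)) with hΨset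
  have hH : H = ⇑Ψ ∘ fderiv ℝ (fderiv ℝ u) := by
    funext x
    rw [hHdef]
    simp only [Function.comp_apply, hfderivF x]
    rfl
  have hdH : Differentiable ℝ H := by rw [hH]; exact Ψ.differentiable.comp hD2d
  have hfderivH : ∀ x, fderiv ℝ H x = Ψ.comp (fderiv ℝ (fderiv ℝ (fderiv ℝ u)) x) := by
    intro x; rw [hH]; exact (Ψ.hasFDerivAt.comp x (hD2d x).hasFDerivAt).fderiv
  obtain ⟨C2, hC2⟩ := hbdd 2 (by norm_num)
  obtain ⟨C3, hC3⟩ := hbdd 3 le_rfl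
  have hC2n : 0 ≤ C2 := le_trans (norm_nonneg _) (hC2 0)
  have hC3n : 0 ≤ C3 := le_trans (norm_nonneg _) (hC3 0)
  set M1 := 2 * C2 with hM1set
  set M2 := 2 * C3 with hM2set
  have hM1 : ∀ x, ‖fderiv ℝ F x‖ ≤ M1 := by
    intro x
    rw [hfderivF x]
    apply ContinuousLinearMap.opNorm_le_bound _ (by positivity)
    intro v
    have hD2norm : ‖fderiv ℝ (fderiv ℝ u) x‖ ≤ C2 := by
      have e0 : ‖fderiv ℝ (fderiv ℝ u) x‖ = ‖iteratedFDeriv ℝ 0 (fderiv ℝ (fderiv ℝ u)) x‖ :=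
        (norm_iteratedFDeriv_zero).symm
      rw [e0, norm_iteratedFDeriv_fderiv, norm_iteratedFDeriv_fderiv]
      simpa using hC2 x
    have hval : (Φ.comp (fderiv ℝ (fderiv ℝ u) x)) v
        = (fderiv ℝ (fderiv ℝ u) x v (ee 2)) 0 - (fderiv ℝ (fderiv ℝ u) x v (ee 0)) 2 := rfl
    rw [hval, Real.norm_eq_abs]
    have h1 : |(fderiv ℝ (fderiv ℝ u) x v (ee 2)) 0| ≤ ‖fderiv ℝ (fderiv ℝ u) x v (ee 2)‖ := by
      rw [← Real.norm_eq_abs]; exact norm_le_pi_norm _ 0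
    have h2 : |(fderiv ℝ (fderiv ℝ u) x v (ee 0)) 2| ≤ ‖fderiv ℝ (fderiv ℝ u) x v (ee 0)‖ := by
      rw [← Real.norm_eq_abs]; exact norm_le_pi_norm _ 2
    have h3 : ‖fderiv ℝ (fderiv ℝ u) x v (ee 2)‖ ≤ C2 * ‖v‖ := by
      calc ‖fderiv ℝ (fderiv ℝ u) x v (ee 2)‖
          ≤ ‖fderiv ℝ (fderiv ℝ u) x‖ * ‖v‖ * ‖ee 2‖ := (fderiv ℝ (fderiv ℝ u) x).le_opNorm₂ v (ee 2)
        _ = ‖fderiv ℝ (fderiv ℝ u) x‖ * ‖v‖ := by rw [norm_ee]; ring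
        _ ≤ C2 * ‖v‖ := mul_le_mul_of_nonneg_right hD2norm (norm_nonneg v)
    have h4 : ‖fderiv ℝ (fderiv ℝ u) x v (ee 0)‖ ≤ C2 * ‖v‖ := by
      calc ‖fderiv ℝ (fderiv ℝ u) x v (ee 0)‖
          ≤ ‖fderiv ℝ (fderiv ℝ u) x‖ * ‖v‖ * ‖ee 0‖ := (fderiv ℝ (fderiv ℝ u) x).le_opNorm₂ v (ee 0)
        _ = ‖fderiv ℝ (fderiv ℝ u) x‖ * ‖v‖ := by rw [norm_ee]; ring
        _ ≤ C2 * ‖v‖ := mul_le_mul_of_nonneg_right hD2norm (norm_nonneg v)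
    calc |(fderiv ℝ (fderiv ℝ u) x v (ee 2)) 0 - (fderiv ℝ (fderiv ℝ u) x v (ee 0)) 2|
        ≤ |(fderiv ℝ (fderiv ℝ u) x v (ee 2)) 0| + |(fderiv ℝ (fderiv ℝ u) x v (ee 0)) 2| :=
          abs_sub _ _
      _ ≤ C2 * ‖v‖ + C2 * ‖v‖ := by
          gcongr
          · exact le_trans h1 h3
          · exact le_trans h2 h4
      _ = M1 * ‖v‖ := by rw [hM1set]; ring
  have hM2 : ∀ x, ‖fderiv ℝ H x‖ ≤ M2 := by
    intro x
    rw [hfderivH x]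
    apply ContinuousLinearMap.opNorm_le_bound _ (by positivity)
    intro v
    have hD3norm : ‖fderiv ℝ (fderiv ℝ (fderiv ℝ u)) x‖ ≤ C3 := by
      have e0 : ‖fderiv ℝ (fderiv ℝ (fderiv ℝ u)) x‖
          = ‖iteratedFDeriv ℝ 0 (fderiv ℝ (fderiv ℝ (fderiv ℝ u))) x‖ :=
        (norm_iteratedFDeriv_zero).symm
      rw [e0, norm_iteratedFDeriv_fderiv, norm_iteratedFDeriv_fderiv, norm_iteratedFDeriv_fderiv]
      simpa using hC3 x
    set T := fderiv ℝ (fderiv ℝ (fderiv ℝ u)) x v (ee 0) with hTset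
    have hval : (Ψ.comp (fderiv ℝ (fderiv ℝ (fderiv ℝ u)) x)) v
        = (T (ee 2)) 0 - (T (ee 0)) 2 := rfl
    rw [hval, Real.norm_eq_abs]
    have hTn : ‖T‖ ≤ C3 * ‖v‖ := by
      calc ‖T‖ ≤ ‖fderiv ℝ (fderiv ℝ (fderiv ℝ u)) x v‖ * ‖ee 0‖ :=
            (fderiv ℝ (fderiv ℝ (fderiv ℝ u)) x v).le_opNorm (ee 0)
        _ = ‖fderiv ℝ (fderiv ℝ (fderiv ℝ u)) x v‖ := by rw [norm_ee]; ring
        _ ≤ ‖fderiv ℝ (fderiv ℝ (fderiv ℝ u)) x‖ * ‖v‖ :=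
            (fderiv ℝ (fderiv ℝ (fderiv ℝ u)) x).le_opNorm v
        _ ≤ C3 * ‖v‖ := mul_le_mul_of_nonneg_right hD3norm (norm_nonneg v)
    have h1 : |(T (ee 2)) 0| ≤ ‖T (ee 2)‖ := by
      rw [← Real.norm_eq_abs]; exact norm_le_pi_norm _ 0
    have h2 : |(T (ee 0)) 2| ≤ ‖T (ee 0)‖ := by
      rw [← Real.norm_eq_abs]; exact norm_le_pi_norm _ 2
    have h3 : ‖T (ee 2)‖ ≤ C3 * ‖v‖ := by
      calc ‖T (ee 2)‖ ≤ ‖T‖ * ‖ee 2‖ := T.le_opNorm (ee 2)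
        _ = ‖T‖ := by rw [norm_ee]; ring
        _ ≤ C3 * ‖v‖ := hTn
    have h4 : ‖T (ee 0)‖ ≤ C3 * ‖v‖ := by
      calc ‖T (ee 0)‖ ≤ ‖T‖ * ‖ee 0‖ := T.le_opNorm (ee 0)
        _ = ‖T‖ := by rw [norm_ee]; ring
        _ ≤ C3 * ‖v‖ := hTn
    calc |(T (ee 2)) 0 - (T (ee 0)) 2| ≤ |(T (ee 2)) 0| + |(T (ee 0)) 2| := abs_sub _ _
      _ ≤ C3 * ‖v‖ + C3 * ‖v‖ := by
          gcongr
          · exact le_trans h1 h3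
          · exact le_trans h2 h4
      _ = M2 * ‖v‖ := by rw [hM2set]; ring
  -- pointwise vanishing of components
  have hu1zero : ∀ z : Fin 4 → ℝ, z 1 = 0 → z 0 ≠ 0 → u z 1 = 0 := by
    intro z h1 h0
    have h := hswirl12 z
    rw [h1, zero_mul] at h
    exact (mul_eq_zero.mp h.symm).resolve_left h0
  have hu3zero : ∀ z : Fin 4 → ℝ, z 3 = 0 → z 2 ≠ 0 → u z 3 = 0 := by
    intro z h3 h2
    have h := hswirl34 z
    rw [h3, zero_mul] at h
    exact (mul_eq_zero.mp h.symm).resolve_left h2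
  have hu0zero : ∀ z : Fin 4 → ℝ, z 0 = 0 → z 1 = 0 → u z 0 = 0 := by
    intro z h0 h1
    have hz : rot12 π z = z := by
      funext i; fin_cases i <;> simp [Real.cos_pi, Real.sin_pi, h0, h1]
    have h := congrFun (hsym12 π z) 0
    rw [hz, rot12_0, Real.cos_pi, Real.sin_pi] at h
    linarith [h]
  have hu2zero : ∀ z : Fin 4 → ℝ, z 2 = 0 → z 3 = 0 → u z 2 = 0 := by
    intro z h2 h3
    have hz : rot34 π z = z := by
      funext i; fin_cases i <;> simp [Real.cos_pi, Real.sin_pi, h2, h3]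
    have h := congrFun (hsym34 π z) 2
    rw [hz, rot34_2, Real.cos_pi, Real.sin_pi] at h
    linarith [h]
  -- invariant components
  have hu2inv12 : ∀ (α : ℝ) (z : Fin 4 → ℝ), u (rot12 α z) 2 = u z 2 := by
    intro α z
    have h := congrFun (hsym12 α z) 2
    rw [h]; rfl
  have hu0inv34 : ∀ (α : ℝ) (z : Fin 4 → ℝ), u (rot34 α z) 0 = u z 0 := by
    intro α z
    have h := congrFun (hsym34 α z) 0
    rw [h]; rfl
  -- rotation-derivative vanishing
  have hrot12deriv : ∀ (f : (Fin 4 → ℝ) → ℝ), Differentiable ℝ f →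
      (∀ (α : ℝ) (z : Fin 4 → ℝ), f (rot12 α z) = f z) →
      ∀ z, fderiv ℝ f z ![-(z 1), z 0, 0, 0] = 0 := by
    intro f hf hinv z
    have hcurve := hasDerivAt_rot12_curve z
    have hcomp : HasDerivAt (fun α : ℝ => f (rot12 α z))
        (fderiv ℝ f (rot12 0 z) ![-(z 1), z 0, 0, 0]) 0 :=
      (hf (rot12 0 z)).hasFDerivAt.comp_hasDerivAt 0 hcurve
    rw [rot12_zero] at hcomp
    have hconst : HasDerivAt (fun α : ℝ => f (rot12 α z)) 0 0 := by
      have heq : (fun α : ℝ => f (rot12 α z)) = fun _ => f z := funext fun α => hinv α z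
      rw [heq]; exact hasDerivAt_const _ _
    exact hcomp.unique hconst
  have hrot34deriv : ∀ (f : (Fin 4 → ℝ) → ℝ), Differentiable ℝ f →
      (∀ (α : ℝ) (z : Fin 4 → ℝ), f (rot34 α z) = f z) →
      ∀ z, fderiv ℝ f z ![0, 0, -(z 3), z 2] = 0 := by
    intro f hf hinv z
    have hcurve := hasDerivAt_rot34_curve z
    have hcomp : HasDerivAt (fun α : ℝ => f (rot34 α z))
        (fderiv ℝ f (rot34 0 z) ![0, 0, -(z 3), z 2]) 0 :=
      (hf (rot34 0 z)).hasFDerivAt.comp_hasDerivAt 0 hcurve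
    rw [rot34_zero] at hcomp
    have hconst : HasDerivAt (fun α : ℝ => f (rot34 α z)) 0 0 := by
      have heq : (fun α : ℝ => f (rot34 α z)) = fun _ => f z := funext fun α => hinv α z
      rw [heq]; exact hasDerivAt_const _ _
    exact hcomp.unique hconst
  -- specialized pd vanishing
  have hpd1u2 : ∀ z : Fin 4 → ℝ, z 1 = 0 → z 0 ≠ 0 → fderiv ℝ (fun y => u y 2) z (ee 1) = 0 := by
    intro z h1 h0
    have h := hrot12deriv (fun y => u y 2) (hdcomp 2) (fun α w => hu2inv12 α w) z
    have hv : (![-(z 1), z 0, 0, 0] : Fin 4 → ℝ) = z 0 • ee 1 := by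
      funext i; fin_cases i <;> simp [h1]
    rw [hv, (fderiv ℝ (fun y => u y 2) z).map_smul, smul_eq_mul] at h
    exact (mul_eq_zero.mp h).resolve_left h0
  have hpd3u0 : ∀ z : Fin 4 → ℝ, z 3 = 0 → z 2 ≠ 0 → fderiv ℝ (fun y => u y 0) z (ee 3) = 0 := by
    intro z h3 h2
    have h := hrot34deriv (fun y => u y 0) (hdcomp 0) (fun α w => hu0inv34 α w) z
    have hv : (![0, 0, -(z 3), z 2] : Fin 4 → ℝ) = z 2 • ee 3 := by
      funext i; fin_cases i <;> simp [h3]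
    rw [hv, (fderiv ℝ (fun y => u y 0) z).map_smul, smul_eq_mul] at h
    exact (mul_eq_zero.mp h).resolve_left h2
  have hpd2u1 : ∀ z : Fin 4 → ℝ, z 1 = 0 → z 0 ≠ 0 → fderiv ℝ (fun y => u y 1) z (ee 2) = 0 := by
    intro z h1 h0
    apply fderiv_line_const _ (hdcomp 1) _ _ 0
    intro t
    apply hu1zero
    · simp [h1]
    · simpa using h0
  have hpd0u3 : ∀ z : Fin 4 → ℝ, z 3 = 0 → z 2 ≠ 0 → fderiv ℝ (fun y => u y 3) z (ee 0) = 0 := by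
    intro z h3 h2
    apply fderiv_line_const _ (hdcomp 3) _ _ 0
    intro t
    apply hu3zero
    · simp [h3]
    · simpa using h2
  have hM1n : 0 ≤ M1 := by rw [hM1set]; positivity
  have hM2n : 0 ≤ M2 := by rw [hM2set]; positivity
  -- F vanishes on the two axes planes
  have hFaxis1 : ∀ c : ℝ, F ![c, 0, 0, 0] = 0 := by
    intro c
    have h1 : fderiv ℝ (fun y => u y 0) ![c, 0, 0, 0] (ee 2) = 0 := by
      apply fderiv_line_even _ (hdcomp 0)
      intro t
      have key : rot34 π ((![c, 0, 0, 0] : Fin 4 → ℝ) + t • ee 2)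
          = (![c, 0, 0, 0] : Fin 4 → ℝ) - t • ee 2 := by
        funext i; fin_cases i <;> simp [Real.cos_pi, Real.sin_pi, Matrix.vecHead, Matrix.vecTail, Fin.ext_iff, show ((3:Fin 4):ℕ) = 3 from rfl, show ((2:Fin 4):ℕ) = 2 from rfl, show ((1:Fin 4):ℕ) = 1 from rfl]
      calc u ((![c, 0, 0, 0] : Fin 4 → ℝ) + t • ee 2) 0
          = u (rot34 π ((![c, 0, 0, 0] : Fin 4 → ℝ) + t • ee 2)) 0 := (hu0inv34 π _).symm
        _ = u ((![c, 0, 0, 0] : Fin 4 → ℝ) - t • ee 2) 0 := by rw [key]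
    have h2 : fderiv ℝ (fun y => u y 2) ![c, 0, 0, 0] (ee 0) = 0 := by
      apply fderiv_line_const _ (hdcomp 2) _ _ 0
      intro t
      apply hu2zero <;> simp [Matrix.vecHead, Matrix.vecTail]
    rw [hFdef, h1, h2, sub_zero]
  have hFaxis2 : ∀ c : ℝ, F ![0, 0, c, 0] = 0 := by
    intro c
    have h1 : fderiv ℝ (fun y => u y 0) ![0, 0, c, 0] (ee 2) = 0 := by
      apply fderiv_line_const _ (hdcomp 0) _ _ 0
      intro t
      apply hu0zero <;> simp [Matrix.vecHead, Matrix.vecTail]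
    have h2 : fderiv ℝ (fun y => u y 2) ![0, 0, c, 0] (ee 0) = 0 := by
      apply fderiv_line_even _ (hdcomp 2)
      intro t
      have key : rot12 π ((![0, 0, c, 0] : Fin 4 → ℝ) + t • ee 0)
          = (![0, 0, c, 0] : Fin 4 → ℝ) - t • ee 0 := by
        funext i; fin_cases i <;> simp [Real.cos_pi, Real.sin_pi, Matrix.vecHead, Matrix.vecTail, Fin.ext_iff, show ((3:Fin 4):ℕ) = 3 from rfl, show ((2:Fin 4):ℕ) = 2 from rfl, show ((1:Fin 4):ℕ) = 1 from rfl]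
      calc u ((![0, 0, c, 0] : Fin 4 → ℝ) + t • ee 0) 2
          = u (rot12 π ((![0, 0, c, 0] : Fin 4 → ℝ) + t • ee 0)) 2 := (hu2inv12 π _).symm
        _ = u ((![0, 0, c, 0] : Fin 4 → ℝ) - t • ee 0) 2 := by rw [key]
    rw [hFdef, h1, h2, sub_zero]
  have hHaxis : ∀ c : ℝ, H ![c, 0, 0, 0] = 0 := by
    intro c
    rw [hHdef]
    apply fderiv_line_const F hdF _ _ 0
    intro t
    have heq : (![c, 0, 0, 0] : Fin 4 → ℝ) + t • ee 0 = ![c + t, 0, 0, 0] := by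
      funext i; fin_cases i <;> simp [Matrix.vecHead, Matrix.vecTail]
    rw [heq]
    exact hFaxis1 (c + t)
  -- reduction identities under rotations
  have hred12 : ∀ (α : ℝ) (x : Fin 4 → ℝ),
      F (rot12 α x) = Real.cos α * F x - Real.sin α *
        (fderiv ℝ (fun y => u y 1) x (ee 2) - fderiv ℝ (fun y => u y 2) x (ee 1)) := by
    intro α x
    have hcs : Real.sin α ^ 2 + Real.cos α ^ 2 = 1 := Real.sin_sq_add_cos_sq α
    -- invariance of u·2
    have h2inv : ∀ y, (fun w => u w 2) (R12 α y) = (fun w => u w 2) y := fun y => hu2inv12 α y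
    have e1 := fderiv_symm _ _ (hdcomp 2) (R12 α) h2inv x (ee 0)
    have e2 := fderiv_symm _ _ (hdcomp 2) (R12 α) h2inv x (ee 1)
    have hv0 : R12 α (ee 0) = Real.cos α • ee 0 + Real.sin α • ee 1 := by
      funext i; fin_cases i <;>
        simp [Matrix.vecHead, Matrix.vecTail]
    have hv1 : R12 α (ee 1) = (-Real.sin α) • ee 0 + Real.cos α • ee 1 := by
      funext i; fin_cases i <;>
        simp [Matrix.vecHead, Matrix.vecTail]
    rw [hv0] at e1
    rw [hv1] at e2
    rw [map_add, _root_.map_smul, _root_.map_smul, smul_eq_mul, smul_eq_mul] at e1 e2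
    rw [show R12 α x = rot12 α x from rfl] at e1 e2
    have hA0 : fderiv ℝ (fun w => u w 2) (rot12 α x) (ee 0)
        = Real.cos α * fderiv ℝ (fun w => u w 2) x (ee 0)
          - Real.sin α * fderiv ℝ (fun w => u w 2) x (ee 1) := by
      linear_combination Real.cos α * e1 - Real.sin α * e2
        - (fderiv ℝ (fun w => u w 2) (rot12 α x) (ee 0)) * hcs
    -- transformation of u·0
    have h0eq : ∀ y, (fun w => u w 0) (R12 α y)
        = (fun w => Real.cos α * u w 0 - Real.sin α * u w 1) y := by
      intro y
      show u (rot12 α y) 0 = Real.cos α * u y 0 - Real.sin α * u y 1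
      rw [congrFun (hsym12 α y) 0, rot12_0]
      ring
    have e3 := fderiv_symm (fun w => u w 0)
      (fun w => Real.cos α * u w 0 - Real.sin α * u w 1) (hdcomp 0) (R12 α) h0eq x (ee 2)
    have hv2 : R12 α (ee 2) = ee 2 := by
      funext i; fin_cases i <;>
        simp [Matrix.vecHead, Matrix.vecTail]
    rw [hv2, show R12 α x = rot12 α x from rfl] at e3
    have hgder : fderiv ℝ (fun w => Real.cos α * u w 0 - Real.sin α * u w 1) x
        = Real.cos α • fderiv ℝ (fun y => u y 0) x - Real.sin α • fderiv ℝ (fun y => u y 1) x := by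
      have h := (((hdcomp 0) x).hasFDerivAt.const_mul (Real.cos α)).sub
        (((hdcomp 1) x).hasFDerivAt.const_mul (Real.sin α))
      exact h.fderiv
    rw [hgder] at e3
    simp only [ContinuousLinearMap.sub_apply, ContinuousLinearMap.smul_apply, smul_eq_mul] at e3
    rw [hFdef, hFdef, e3, hA0]
    ring
  have hred34 : ∀ (α : ℝ) (x : Fin 4 → ℝ),
      F (rot34 α x) = Real.cos α * F x - Real.sin α *
        (fderiv ℝ (fun y => u y 0) x (ee 3) - fderiv ℝ (fun y => u y 3) x (ee 0)) := by
    intro α x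
    have hcs : Real.sin α ^ 2 + Real.cos α ^ 2 = 1 := Real.sin_sq_add_cos_sq α
    have h0inv : ∀ y, (fun w => u w 0) (R34 α y) = (fun w => u w 0) y := fun y => hu0inv34 α y
    have e1 := fderiv_symm _ _ (hdcomp 0) (R34 α) h0inv x (ee 2)
    have e2 := fderiv_symm _ _ (hdcomp 0) (R34 α) h0inv x (ee 3)
    have hv2 : R34 α (ee 2) = Real.cos α • ee 2 + Real.sin α • ee 3 := by
      funext i; fin_cases i <;>
        simp [Matrix.vecHead, Matrix.vecTail]
    have hv3 : R34 α (ee 3) = (-Real.sin α) • ee 2 + Real.cos α • ee 3 := by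
      funext i; fin_cases i <;>
        simp [Matrix.vecHead, Matrix.vecTail]
    rw [hv2] at e1
    rw [hv3] at e2
    rw [map_add, _root_.map_smul, _root_.map_smul, smul_eq_mul, smul_eq_mul] at e1 e2
    rw [show R34 α x = rot34 α x from rfl] at e1 e2
    have hA2 : fderiv ℝ (fun w => u w 0) (rot34 α x) (ee 2)
        = Real.cos α * fderiv ℝ (fun w => u w 0) x (ee 2)
          - Real.sin α * fderiv ℝ (fun w => u w 0) x (ee 3) := by
      linear_combination Real.cos α * e1 - Real.sin α * e2
        - (fderiv ℝ (fun w => u w 0) (rot34 α x) (ee 2)) * hcs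
    have h2eq : ∀ y, (fun w => u w 2) (R34 α y)
        = (fun w => Real.cos α * u w 2 - Real.sin α * u w 3) y := by
      intro y
      show u (rot34 α y) 2 = Real.cos α * u y 2 - Real.sin α * u y 3
      rw [congrFun (hsym34 α y) 2, rot34_2]
      ring
    have e3 := fderiv_symm (fun w => u w 2)
      (fun w => Real.cos α * u w 2 - Real.sin α * u w 3) (hdcomp 2) (R34 α) h2eq x (ee 0)
    have hv0 : R34 α (ee 0) = ee 0 := by
      funext i; fin_cases i <;>
        simp [Matrix.vecHead, Matrix.vecTail]
    rw [hv0, show R34 α x = rot34 α x from rfl] at e3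
    have hgder : fderiv ℝ (fun w => Real.cos α * u w 2 - Real.sin α * u w 3) x
        = Real.cos α • fderiv ℝ (fun y => u y 2) x - Real.sin α • fderiv ℝ (fun y => u y 3) x := by
      have h := (((hdcomp 2) x).hasFDerivAt.const_mul (Real.cos α)).sub
        (((hdcomp 3) x).hasFDerivAt.const_mul (Real.sin α))
      exact h.fderiv
    rw [hgder] at e3
    simp only [ContinuousLinearMap.sub_apply, ContinuousLinearMap.smul_apply, smul_eq_mul] at e3
    rw [hFdef, hFdef, e3, hA2]
    ring
  -- slice bounds
  have hslice : ∀ r s : ℝ, 0 ≤ r → 0 ≤ s →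
      (1 + r + s) * |F ![r, 0, s, 0]| ≤ (M2 + 2 * M1) * (r * s) := by
    intro r s hr0 hs0
    have hdiff1 : (![r, 0, s, 0] : Fin 4 → ℝ) - ![0, 0, s, 0] = r • ee 0 := by
      funext i; fin_cases i <;> simp [Matrix.vecHead, Matrix.vecTail]
    have hdiff2 : (![r, 0, s, 0] : Fin 4 → ℝ) - ![r, 0, 0, 0] = s • ee 2 := by
      funext i; fin_cases i <;> simp [Matrix.vecHead, Matrix.vecTail]
    have b1 : |F ![r, 0, s, 0]| ≤ M1 * r := by
      have h := mvt F hdF hM1 ![0, 0, s, 0] ![r, 0, s, 0]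
      rw [hFaxis2 s, sub_zero, hdiff1, norm_smul, norm_ee, Real.norm_eq_abs,
        abs_of_nonneg hr0, mul_one] at h
      exact h
    have b2 : |F ![r, 0, s, 0]| ≤ M1 * s := by
      have h := mvt F hdF hM1 ![r, 0, 0, 0] ![r, 0, s, 0]
      rw [hFaxis1 r, sub_zero, hdiff2, norm_smul, norm_ee, Real.norm_eq_abs,
        abs_of_nonneg hs0, mul_one] at h
      exact h
    have hbound : ∀ t : ℝ, |H ![t, 0, s, 0]| ≤ M2 * s := by
      intro t
      have h := mvt H hdH hM2 ![t, 0, 0, 0] ![t, 0, s, 0]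
      have hdiff3 : (![t, 0, s, 0] : Fin 4 → ℝ) - ![t, 0, 0, 0] = s • ee 2 := by
        funext i; fin_cases i <;> simp [Matrix.vecHead, Matrix.vecTail]
      rw [hHaxis t, sub_zero, hdiff3, norm_smul, norm_ee, Real.norm_eq_abs,
        abs_of_nonneg hs0, mul_one] at h
      exact h
    have hline : ∀ t : ℝ, (![0, 0, s, 0] : Fin 4 → ℝ) + t • ee 0 = ![t, 0, s, 0] := by
      intro t
      funext i; fin_cases i <;> simp [Matrix.vecHead, Matrix.vecTail]
    have ba : |F ![r, 0, s, 0]| ≤ M2 * s * r := by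
      have hg : ∀ t ∈ Set.Icc (0:ℝ) r,
          HasDerivWithinAt (fun t : ℝ => F ((![0, 0, s, 0] : Fin 4 → ℝ) + t • ee 0))
            (H ((![0, 0, s, 0] : Fin 4 → ℝ) + t • ee 0)) (Set.Icc 0 r) t := by
        intro t _
        exact (hasDerivAt_line F hdF ![0, 0, s, 0] (ee 0) t).hasDerivWithinAt
      have hb : ∀ t ∈ Set.Ico (0:ℝ) r,
          ‖H ((![0, 0, s, 0] : Fin 4 → ℝ) + t • ee 0)‖ ≤ M2 * s := by
        intro t _
        rw [hline t, Real.norm_eq_abs]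
        exact hbound t
      have h := norm_image_sub_le_of_norm_deriv_le_segment' hg hb r (Set.right_mem_Icc.mpr hr0)
      rw [hline r, hline 0, hFaxis2 s, sub_zero, Real.norm_eq_abs, sub_zero] at h
      exact h
    have h1 : r * |F ![r, 0, s, 0]| ≤ r * (M1 * s) := mul_le_mul_of_nonneg_left b2 hr0
    have h2 : s * |F ![r, 0, s, 0]| ≤ s * (M1 * r) := mul_le_mul_of_nonneg_left b1 hs0
    nlinarith [ba, h1, h2, abs_nonneg (F ![r, 0, s, 0])]
  -- final assembly
  refine ⟨M2 + 2 * M1, ?_⟩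
  intro x hx
  have hx0 : x 0 ≠ 0 := left_ne_zero_of_mul hx
  have hx2 : x 2 ≠ 0 := right_ne_zero_of_mul hx
  set r := rx x with hrdef
  set s := sx x with hsdef
  have hr0 : 0 < r := by
    rw [hrdef, rx]; apply Real.sqrt_pos.mpr; positivity
  have hs0 : 0 < s := by
    rw [hsdef, sx]; apply Real.sqrt_pos.mpr; positivity
  have habs0 : |x 0| ≤ r := by
    rw [hrdef, rx, ← Real.sqrt_sq_eq_abs]
    apply Real.sqrt_le_sqrt; nlinarith [sq_nonneg (x 1)]
  have habs2 : |x 2| ≤ s := by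
    rw [hsdef, sx, ← Real.sqrt_sq_eq_abs]
    apply Real.sqrt_le_sqrt; nlinarith [sq_nonneg (x 3)]
  -- choose angles
  have habsz1 : ‖(x 0 : ℂ) + (x 1 : ℂ) * Complex.I‖ = r := by
    rw [Complex.norm_add_mul_I, hrdef, rx]
  have hzne1 : ((x 0 : ℂ) + (x 1 : ℂ) * Complex.I) ≠ 0 := by
    intro h
    apply hx0
    have := congrArg Complex.re h
    simpa using this
  set α := Complex.arg ((x 0 : ℂ) + (x 1 : ℂ) * Complex.I) with hαdef
  have hcosα : Real.cos α = x 0 / r := by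
    rw [hαdef, Complex.cos_arg hzne1, habsz1]; simp
  have hsinα : Real.sin α = x 1 / r := by
    rw [hαdef, Complex.sin_arg, habsz1]; simp
  have habsz2 : ‖(x 2 : ℂ) + (x 3 : ℂ) * Complex.I‖ = s := by
    rw [Complex.norm_add_mul_I, hsdef, sx]
  have hzne2 : ((x 2 : ℂ) + (x 3 : ℂ) * Complex.I) ≠ 0 := by
    intro h
    apply hx2
    have := congrArg Complex.re h
    simpa using this
  set φ := Complex.arg ((x 2 : ℂ) + (x 3 : ℂ) * Complex.I) with hφdef
  have hcosφ : Real.cos φ = x 2 / s := by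
    rw [hφdef, Complex.cos_arg hzne2, habsz2]; simp
  have hsinφ : Real.sin φ = x 3 / s := by
    rw [hφdef, Complex.sin_arg, habsz2]; simp
  set q : Fin 4 → ℝ := ![r, 0, x 2, x 3] with hqdef
  set p : Fin 4 → ℝ := ![r, 0, s, 0] with hpdef
  have hq : rot12 α q = x := by
    funext i
    fin_cases i <;>
      simp [hqdef, hcosα, hsinα, Matrix.vecHead, Matrix.vecTail] <;>
      field_simp
  have hp : rot34 φ p = q := by
    funext i
    fin_cases i <;>
      simp [hpdef, hqdef, hcosφ, hsinφ, Matrix.vecHead, Matrix.vecTail] <;>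
      field_simp
  have hq1 : q 1 = 0 := by rw [hqdef]; simp
  have hq0 : q 0 ≠ 0 := by rw [hqdef]; simpa using hr0.ne'
  have hp3 : p 3 = 0 := by rw [hpdef]; simp
  have hp2 : p 2 ≠ 0 := by rw [hpdef]; simpa using hs0.ne'
  have step1 : F x = (x 0 / r) * F q := by
    have h := hred12 α q
    rw [hq] at h
    rw [h, hpd2u1 q hq1 hq0, hpd1u2 q hq1 hq0, hcosα]
    ring
  have step2 : F q = (x 2 / s) * F p := by
    have h := hred34 φ p
    rw [hp] at h
    rw [h, hpd3u0 p hp3 hp2, hpd0u3 p hp3 hp2, hcosφ]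
    ring
  have key := hslice r s hr0.le hs0.le
  have hab : (0:ℝ) < |x 0 * x 2| := abs_pos.mpr hx
  show (1 + r + s) * |F x| / |x 0 * x 2| ≤ M2 + 2 * M1
  rw [div_le_iff₀ hab]
  have hfx : |F x| = |x 0| / r * (|x 2| / s * |F p|) := by
    rw [step1, step2, abs_mul, abs_mul, abs_div, abs_div,
      abs_of_pos hr0, abs_of_pos hs0]
  rw [hfx, abs_mul]
  have e1 : (1 + r + s) * (|x 0| / r * (|x 2| / s * |F p|))
      = ((1 + r + s) * |F p|) * (|x 0| * |x 2|) / (r * s) := by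
    field_simp
    try ring
  rw [e1]
  have e2 : ((1 + r + s) * |F p|) * (|x 0| * |x 2|) / (r * s)
      ≤ ((M2 + 2 * M1) * (r * s)) * (|x 0| * |x 2|) / (r * s) := by
    gcongr
    try exact mul_nonneg (abs_nonneg _) (abs_nonneg _)
  refine le_trans e2 (le_of_eq ?_)
  field_simp
  try ring
end
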